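/- arXiv:0912.2914 — 4 statements merged into one kernel-verified Lean document; each statement's English description precedes it below -/
import Mathlib

section
/- Let S be a set of n ≥ 2 points in general position in ℝ² and let p and q be two distinct extreme points of the convex hull of S. Then there is an enumeration p_1, …, p_n of S with p_1 = p and p_n = q such that the polygonal path p_1 p_2 ⋯ p_n is simple: for all 1 ≤ i < j ≤ n − 1, the segments [p_i, p_{i+1}] and [p_j, p_{j+1}] are disjoint when j > i + 1, and intersect exactly in the single point p_{i+1} when j = i + 1. -/
open Set

noncomputable section

/-- Points of the plane. -/
abbrev Pt : Type := ℝ × ℝ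

/-- A set of points is in general position if no three distinct points are collinear. -/
def GenPos (S : Set Pt) : Prop :=
  ∀ p ∈ S, ∀ q ∈ S, ∀ r ∈ S, p ≠ q → p ≠ r → q ≠ r → ¬ Collinear ℝ ({p, q, r} : Set Pt)

/-- The cyclic successor of an index. -/
def nextIdx {m : ℕ} (i : Fin m) : Fin m := ⟨((i : ℕ) + 1) % m, Nat.mod_lt _ i.pos⟩

/-- The `i`-th edge of the closed polygonal curve on the vertex sequence `v`. -/
def polyEdge {m : ℕ} (v : Fin m → Pt) (i : Fin m) : Set Pt :=
  segment ℝ (v i) (v (nextIdx i))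

/-- The closed polygonal curve on the vertex sequence `v`. -/
def polyCurve {m : ℕ} (v : Fin m → Pt) : Set Pt := ⋃ i, polyEdge v i

/-- The vertex sequence `v` determines a simple closed polygon: there are at least `3`
pairwise distinct vertices, consecutive edges meet exactly in their common endpoint, and
any two other distinct edges are disjoint. -/
def IsSimplePolygon {m : ℕ} (v : Fin m → Pt) : Prop :=
  3 ≤ m ∧ Function.Injective v ∧
  (∀ i : Fin m, polyEdge v i ∩ polyEdge v (nextIdx i) = {v (nextIdx i)}) ∧
  (∀ i j : Fin m, i ≠ j → j ≠ nextIdx i → i ≠ nextIdx j → polyEdge v i ∩ polyEdge v j = ∅)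

/-- The simple closed polygonal curve on `v` encloses `p`: `p` lies in a bounded
connected component of the complement of the curve. -/
def Encloses {m : ℕ} (v : Fin m → Pt) (p : Pt) : Prop :=
  p ∉ polyCurve v ∧ Bornology.IsBounded (connectedComponentIn (polyCurve v)ᶜ p)

/-- The simple closed polygonal curve on `v` excludes `p`: `p` lies in an unbounded
connected component of the complement of the curve. -/
def Excludes {m : ℕ} (v : Fin m → Pt) (p : Pt) : Prop :=
  p ∉ polyCurve v ∧ ¬ Bornology.IsBounded (connectedComponentIn (polyCurve v)ᶜ p)


namespace SPPaux

/-- cross product of two planar vectors -/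
def cr (u v : Pt) : ℝ := u.1 * v.2 - u.2 * v.1

lemma cr_swap (u v : Pt) : cr u v = - cr v u := by simp [cr]; ring

lemma cr_self (u : Pt) : cr u u = 0 := by unfold cr; ring

lemma cr_zero_right (u : Pt) : cr u 0 = 0 := by simp [cr]

lemma cr_smul_right (u v : Pt) (c : ℝ) : cr u (c • v) = c * cr u v := by
  simp [cr, Prod.smul_fst, Prod.smul_snd, smul_eq_mul]; ring

lemma cr_flip (p q x : Pt) : cr (p - q) (x - q) = - cr (q - p) (x - p) := by
  simp [cr]; ring

/-- affine evaluation of the functional `x ↦ cr w (x - o)` on a convex combination -/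
lemma cr_affine (w o x y : Pt) {s t : ℝ} (hst : s + t = 1) :
    cr w (s • x + t • y - o) = s * cr w (x - o) + t * cr w (y - o) := by
  have ht : t = 1 - s := by linarith
  subst ht
  simp [cr, Prod.smul_fst, Prod.smul_snd, smul_eq_mul]
  ring

lemma seg_nonneg {w o a b : Pt} (ha : 0 ≤ cr w (a - o)) (hb : 0 ≤ cr w (b - o)) :
    ∀ x ∈ segment ℝ a b, 0 ≤ cr w (x - o) := by
  rintro x ⟨s, t, hs, ht, hst, rfl⟩
  rw [cr_affine w o a b hst]
  exact add_nonneg (mul_nonneg hs ha) (mul_nonneg ht hb)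

lemma seg_nonpos {w o a b : Pt} (ha : cr w (a - o) ≤ 0) (hb : cr w (b - o) ≤ 0) :
    ∀ x ∈ segment ℝ a b, cr w (x - o) ≤ 0 := by
  rintro x ⟨s, t, hs, ht, hst, rfl⟩
  rw [cr_affine w o a b hst]
  have := mul_nonpos_of_nonneg_of_nonpos hs ha
  have := mul_nonpos_of_nonneg_of_nonpos ht hb
  linarith

lemma seg_pos {w o a b : Pt} (ha : 0 < cr w (a - o)) (hb : 0 < cr w (b - o)) :
    ∀ x ∈ segment ℝ a b, 0 < cr w (x - o) := by
  rintro x ⟨s, t, hs, ht, hst, rfl⟩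
  rw [cr_affine w o a b hst]
  rcases lt_or_eq_of_le hs with h | h
  · nlinarith [mul_nonneg ht hb.le, mul_pos h ha]
  · have h1 : t = 1 := by linarith
    rw [h1, ← h]
    simpa using hb

lemma seg_neg {w o a b : Pt} (ha : cr w (a - o) < 0) (hb : cr w (b - o) < 0) :
    ∀ x ∈ segment ℝ a b, cr w (x - o) < 0 := by
  rintro x ⟨s, t, hs, ht, hst, rfl⟩
  rw [cr_affine w o a b hst]
  rcases lt_or_eq_of_le hs with h | h
  · nlinarith [mul_nonpos_of_nonneg_of_nonpos ht hb.le, mul_pos h (neg_pos.mpr ha)]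
  · have h1 : t = 1 := by linarith
    rw [h1, ← h]
    simpa using hb

lemma seg_zero {w o a b : Pt} (ha : cr w (a - o) = 0) (hb : cr w (b - o) ≠ 0) :
    ∀ x ∈ segment ℝ a b, cr w (x - o) = 0 → x = a := by
  rintro x ⟨s, t, hs, ht, hst, rfl⟩ hx
  rw [cr_affine w o a b hst, ha, mul_zero, zero_add] at hx
  have ht0 : t = 0 := by
    rcases mul_eq_zero.mp hx with h | h
    · exact h
    · exact absurd h hb
  subst ht0
  have hs1 : s = 1 := by linarith
  subst hs1
  simp

lemma inter_sub {w o A B C D : Pt} (hA : 0 ≤ cr w (A - o)) (hB : 0 ≤ cr w (B - o))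
    (hC : cr w (C - o) = 0) (hD : cr w (D - o) < 0) :
    segment ℝ A B ∩ segment ℝ C D ⊆ {C} := by
  rintro x ⟨h1, h2⟩
  have hx1 : 0 ≤ cr w (x - o) := seg_nonneg hA hB x h1
  have hx2 : cr w (x - o) ≤ 0 := seg_nonpos (le_of_eq hC) (le_of_lt hD) x h2
  have hx0 : cr w (x - o) = 0 := le_antisymm hx2 hx1
  exact seg_zero hC (ne_of_lt hD) x h2 hx0

lemma parallel {u v : Pt} (hu : u ≠ 0) (h : cr u v = 0) : ∃ c : ℝ, v = c • u := by
  have hu' : u.1 ≠ 0 ∨ u.2 ≠ 0 := by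
    by_contra hc
    push_neg at hc
    exact hu (Prod.ext hc.1 hc.2)
  have h' : u.1 * v.2 = u.2 * v.1 := by
    have := h
    simp only [cr] at this
    linarith
  rcases hu' with h1 | h2
  · refine ⟨v.1 / u.1, ?_⟩
    have hfst : v.1 / u.1 * u.1 = v.1 := by field_simp
    have hsnd : v.1 / u.1 * u.2 = v.2 := by
      field_simp
      nlinarith [h']
    apply Prod.ext
    · simp only [Prod.smul_fst, smul_eq_mul]
      linarith [hfst]
    · simp only [Prod.smul_snd, smul_eq_mul]
      linarith [hsnd]
  · refine ⟨v.2 / u.2, ?_⟩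
    have hfst : v.2 / u.2 * u.1 = v.1 := by
      field_simp
      nlinarith [h']
    have hsnd : v.2 / u.2 * u.2 = v.2 := by field_simp
    apply Prod.ext
    · simp only [Prod.smul_fst, smul_eq_mul]
      linarith [hfst]
    · simp only [Prod.smul_snd, smul_eq_mul]
      linarith [hsnd]

lemma collinear_of_cr {p x y : Pt} (h : cr (x - p) (y - p) = 0) :
    Collinear ℝ ({p, x, y} : Set Pt) := by
  rcases eq_or_ne y p with hyp | hyp
  · rw [hyp]
    have hset : ({p, x, p} : Set Pt) ⊆ {p, x} := by intro z hz; simp at hz ⊢; tauto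
    exact (collinear_pair ℝ p x).subset hset
  · have hy0 : y - p ≠ 0 := sub_ne_zero.mpr hyp
    have h' : cr (y - p) (x - p) = 0 := by rw [cr_swap] at h; linarith [h]
    obtain ⟨c, hc⟩ := parallel hy0 h'
    rw [collinear_iff_of_mem (show p ∈ ({p, x, y} : Set Pt) by simp)]
    refine ⟨y - p, ?_⟩
    intro z hz
    rcases hz with rfl | rfl | rfl
    · exact ⟨0, by simp⟩
    · exact ⟨c, by rw [← hc]; simp⟩
    · exact ⟨1, by simp⟩

/-- the angular sorting key around pivot `o` with reference direction `w` -/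
def key (o w x : Pt) : ℝ := cr (-w.2, w.1) (x - o) / cr w (x - o)

lemma key_lt {o w x y : Pt} (hw : w ≠ 0) (hx : 0 < cr w (x - o)) (hy : 0 < cr w (y - o)) :
    (key o w x < key o w y ↔ 0 < cr (x - o) (y - o)) := by
  have hw2 : 0 < w.1 ^ 2 + w.2 ^ 2 := by
    rcases (show w.1 ≠ 0 ∨ w.2 ≠ 0 by
      by_contra hc; push_neg at hc; exact hw (Prod.ext hc.1 hc.2)) with h | h
    · positivity
    · positivity
  rw [key, key, div_lt_div_iff₀ hx hy]
  have hid : cr (-w.2, w.1) (y - o) * cr w (x - o) - cr (-w.2, w.1) (x - o) * cr w (y - o)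
      = (w.1 ^ 2 + w.2 ^ 2) * cr (x - o) (y - o) := by
    show (-w.2 * (y - o).2 - w.1 * (y - o).1) * (w.1 * (x - o).2 - w.2 * (x - o).1)
        - (-w.2 * (x - o).2 - w.1 * (x - o).1) * (w.1 * (y - o).2 - w.2 * (y - o).1)
      = (w.1 ^ 2 + w.2 ^ 2) * ((x - o).1 * (y - o).2 - (x - o).2 * (y - o).1)
    ring
  constructor
  · intro h
    nlinarith [hw2]
  · intro h
    nlinarith [hw2]


lemma exists_mono_enum (L : Finset Pt) (k : Pt → ℝ) (hinj : Set.InjOn k ↑L) :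
    ∃ f : Fin L.card → Pt, (∀ i, f i ∈ L) ∧ (∀ x ∈ L, ∃ i, f i = x) ∧
      ∀ i j, i < j → k (f i) < k (f j) := by
  classical
  have hcard : (L.image k).card = L.card := Finset.card_image_of_injOn hinj
  set g := (L.image k).orderIsoOfFin hcard with hg
  have hex : ∀ i : Fin L.card, ∃! x, x ∈ L ∧ k x = (g i : ℝ) := by
    intro i
    obtain ⟨x, hx, hkx⟩ := Finset.mem_image.mp (g i).2
    exact ⟨x, ⟨hx, hkx⟩, fun y hy => hinj hy.1 hx (hy.2.trans hkx.symm)⟩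
  refine ⟨fun i => L.choose _ (hex i), fun i => (L.choose_spec _ (hex i)).1, ?_, ?_⟩
  · intro x hx
    have hkx : k x ∈ L.image k := Finset.mem_image_of_mem k hx
    refine ⟨g.symm ⟨k x, hkx⟩, ?_⟩
    have h1 := (L.choose_spec _ (hex (g.symm ⟨k x, hkx⟩))).2
    have h2 : (g (g.symm ⟨k x, hkx⟩) : ℝ) = k x := by
      rw [OrderIso.apply_symm_apply]
    exact hinj (L.choose_spec _ (hex (g.symm ⟨k x, hkx⟩))).1 hx (h1.trans h2)
  · intro i j hij
    have h1 := (L.choose_spec _ (hex i)).2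
    have h2 := (L.choose_spec _ (hex j)).2
    rw [h1, h2]
    exact_mod_cast g.strictMono hij

/-- the vertex sequence of the path -/
def vtx (p q : Pt) (a b : ℕ) (fL : Fin a → Pt) (fR : Fin b → Pt) : ℕ → Pt := fun i =>
  if i = 0 then p
  else if h : 1 ≤ i ∧ i ≤ a then fL ⟨a - i, by omega⟩
  else if h2 : a + 1 ≤ i ∧ i ≤ a + b then fR ⟨i - a - 1, by omega⟩
  else q

lemma vtx_zero (p q : Pt) (a b : ℕ) (fL : Fin a → Pt) (fR : Fin b → Pt) :
    vtx p q a b fL fR 0 = p := by simp [vtx]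

lemma vtx_L (p q : Pt) (a b : ℕ) (fL : Fin a → Pt) (fR : Fin b → Pt) {i : ℕ}
    (h1 : 1 ≤ i) (h2 : i ≤ a) :
    vtx p q a b fL fR i = fL ⟨a - i, by omega⟩ := by
  rw [vtx, if_neg (by omega), dif_pos ⟨h1, h2⟩]

lemma vtx_R (p q : Pt) (a b : ℕ) (fL : Fin a → Pt) (fR : Fin b → Pt) {i : ℕ}
    (h1 : a + 1 ≤ i) (h2 : i ≤ a + b) :
    vtx p q a b fL fR i = fR ⟨i - a - 1, by omega⟩ := by
  rw [vtx, if_neg (by omega), dif_neg (by omega), dif_pos ⟨h1, h2⟩]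

lemma vtx_q (p q : Pt) (a b : ℕ) (fL : Fin a → Pt) (fR : Fin b → Pt) {i : ℕ}
    (h1 : a + b + 1 ≤ i) :
    vtx p q a b fL fR i = q := by
  rw [vtx, if_neg (by omega), dif_neg (by omega), dif_neg (by omega)]

/-- the crossing lemma: a segment from the open left side of line pq to the open
right side crosses it strictly between p and q, giving the two cross-product signs. -/
lemma crossing {S : Finset Pt} {p q l r : Pt}
    (hp : p ∈ Set.extremePoints ℝ (convexHull ℝ (S : Set Pt)))
    (hq : q ∈ Set.extremePoints ℝ (convexHull ℝ (S : Set Pt)))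
    (hpq : p ≠ q) (hlS : l ∈ S) (hrS : r ∈ S)
    (hGl : 0 < cr (q - p) (l - p)) (hGr : cr (q - p) (r - p) < 0) :
    cr (l - p) (r - p) < 0 ∧ cr (r - q) (l - q) < 0 := by
  set w : Pt := q - p with hwdef
  have hwne : w ≠ 0 := sub_ne_zero.mpr (Ne.symm hpq)
  have hlhull : l ∈ convexHull ℝ (S : Set Pt) := subset_convexHull ℝ _ (by exact_mod_cast hlS)
  have hrhull : r ∈ convexHull ℝ (S : Set Pt) := subset_convexHull ℝ _ (by exact_mod_cast hrS)
  have hphull : p ∈ convexHull ℝ (S : Set Pt) := hp.1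
  have hqhull : q ∈ convexHull ℝ (S : Set Pt) := hq.1
  set den : ℝ := cr w (l - p) - cr w (r - p) with hden
  have hden0 : 0 < den := by rw [hden]; linarith
  set α : ℝ := -cr w (r - p) / den with hα
  set β : ℝ := cr w (l - p) / den with hβ
  have hα0 : 0 < α := div_pos (by linarith) hden0
  have hβ0 : 0 < β := div_pos hGl hden0
  have hαβ : α + β = 1 := by
    rw [hα, hβ]
    field_simp
    linear_combination (-den) * hden
  set z : Pt := α • l + β • r with hz
  have hzseg : z ∈ segment ℝ l r := ⟨α, β, hα0.le, hβ0.le, hαβ, rfl⟩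
  have hzhull : z ∈ convexHull ℝ (S : Set Pt) :=
    (convex_convexHull ℝ _).segment_subset hlhull hrhull hzseg
  have hGz : cr w (z - p) = 0 := by
    rw [hz, cr_affine w p l r hαβ, hα, hβ]
    field_simp
    ring
  obtain ⟨c, hc⟩ := parallel hwne hGz
  -- z ≠ p and z ≠ q
  have hGp : cr w (p - p) = 0 := by rw [sub_self]; exact cr_zero_right w
  have hGq : cr w (q - p) = cr w w := rfl
  have hzp : z ≠ p := by
    intro h
    have hopen : p ∈ openSegment ℝ l r := ⟨α, β, hα0, hβ0, hαβ, by rw [← hz, h]⟩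
    have := (hp.2 hlhull hrhull hopen)
    rw [this] at hGl
    simp [cr_zero_right] at hGl
  have hzq : z ≠ q := by
    intro h
    have hopen : q ∈ openSegment ℝ l r := ⟨α, β, hα0, hβ0, hαβ, by rw [← hz, h]⟩
    have := (hq.2 hlhull hrhull hopen)
    rw [this] at hGl
    rw [cr_self] at hGl
    exact lt_irrefl 0 hGl
  have hc0 : 0 < c := by
    rcases lt_trichotomy c 0 with h | h | h
    · exfalso
      -- p ∈ openSegment z q
      have h1c : (0:ℝ) < 1 - c := by linarith
      have hmem : p ∈ openSegment ℝ z q := by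
        refine ⟨1 / (1 - c), -c / (1 - c), by positivity, div_pos (by linarith) h1c, ?_, ?_⟩
        · field_simp
          ring
        · have hzval : z = p + c • w := by
            have := hc
            rw [sub_eq_iff_eq_add] at this
            rw [this]; abel
          rw [hzval, hwdef]
          have h1 : (1:ℝ) - c ≠ 0 := by linarith
          apply Prod.ext
          · simp only [Prod.smul_fst, Prod.smul_snd, Prod.fst_add, Prod.snd_add,
              Prod.fst_sub, Prod.snd_sub, smul_eq_mul]
            field_simp
            ring
          · simp only [Prod.smul_fst, Prod.smul_snd, Prod.fst_add, Prod.snd_add,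
              Prod.fst_sub, Prod.snd_sub, smul_eq_mul]
            field_simp
            ring
        
      have := (hp.2 hqhull hzhull (by rw [openSegment_symm]; exact hmem))
      exact hpq this.symm
    · exfalso
      apply hzp
      rw [h, zero_smul] at hc
      exact sub_eq_zero.mp hc
    · exact h
  have hc1 : c < 1 := by
    rcases lt_trichotomy c 1 with h | h | h
    · exact h
    · exfalso
      apply hzq
      rw [h, one_smul, hwdef] at hc
      have : z = q := by
        have := hc
        rw [sub_eq_iff_eq_add] at this
        rw [this]; abel
      exact this
    · exfalso
      have hcne : (0:ℝ) < c := by linarith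
      have hmem : q ∈ openSegment ℝ p z := by
        refine ⟨1 - 1 / c, 1 / c, by rw [sub_pos, div_lt_one hcne]; linarith,
          by positivity, by ring, ?_⟩
        have hzval : z = p + c • w := by
          have := hc
          rw [sub_eq_iff_eq_add] at this
          rw [this]; abel
        rw [hzval, hwdef]
        have hcn : c ≠ 0 := by linarith
        apply Prod.ext
        · simp only [Prod.smul_fst, Prod.smul_snd, Prod.fst_add, Prod.snd_add,
            Prod.fst_sub, Prod.snd_sub, smul_eq_mul]
          field_simp
          ring
        · simp only [Prod.smul_fst, Prod.smul_snd, Prod.fst_add, Prod.snd_add,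
            Prod.fst_sub, Prod.snd_sub, smul_eq_mul]
          field_simp
          ring
      have := (hq.2 hphull hzhull hmem)
      exact hpq this
  constructor
  · -- cr (l-p)(r-p) < 0
    have e1 : cr (l - p) (z - p) = β * cr (l - p) (r - p) := by
      rw [hz, cr_affine (l - p) p l r hαβ, cr_self]
      ring
    have e2 : cr (l - p) (z - p) = -c * cr w (l - p) := by
      have hzp' : z - p = c • w := hc
      rw [hzp', cr_smul_right]
      rw [cr_swap (l - p) w]
      ring
    have : β * cr (l - p) (r - p) < 0 := by
      rw [← e1, e2]
      have : 0 < c * cr w (l - p) := mul_pos hc0 hGl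
      linarith
    nlinarith
  · -- cr (r-q)(l-q) < 0
    have e1 : cr (r - q) (z - q) = α * cr (r - q) (l - q) := by
      rw [hz, cr_affine (r - q) q l r hαβ, cr_self]
      ring
    have e2 : cr (r - q) (z - q) = (c - 1) * cr (r - q) w := by
      have hzq' : z - q = (c - 1) • w := by
        have : z - p = c • w := hc
        have hq' : q - p = w := rfl
        have : z - q = (z - p) - (q - p) := by abel
        rw [this, hc, hq']
        rw [sub_smul, one_smul]
      rw [hzq', cr_smul_right]
    have e3 : cr (r - q) w = -cr w (r - p) := by
      rw [cr_swap (r - q) w, hwdef]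
      have : cr (q - p) (r - q) = cr (q - p) (r - p) - cr (q - p) (q - p) := by
        unfold cr
        simp only [Prod.fst_sub, Prod.snd_sub]
        ring
      rw [this, cr_self]
      ring
    have hlt : α * cr (r - q) (l - q) < 0 := by
      rw [← e1, e2, e3]
      have h1 : c - 1 < 0 := by linarith
      have h2 : 0 < -cr w (r - p) := by linarith
      nlinarith
    nlinarith

end SPPaux


/-- **Simple polygonal path (Proposition 4).** For a set `S` of `n ≥ 2` points in general
position and distinct extreme points `p`, `q` of its convex hull, there is an enumeration of
`S` starting at `p` and ending at `q` whose polygonal path is simple: consecutive edges meet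
exactly in their common endpoint and all other pairs of edges are disjoint. -/
theorem simple_polygonal_path (S : Finset Pt) (n : ℕ) (hS : S.card = n) (hn : 2 ≤ n)
    (hgp : GenPos ↑S) (p q : Pt)
    (hp : p ∈ Set.extremePoints ℝ (convexHull ℝ (S : Set Pt)))
    (hq : q ∈ Set.extremePoints ℝ (convexHull ℝ (S : Set Pt)))
    (hpq : p ≠ q) :
    ∃ e : Fin n → Pt, Function.Injective e ∧ Set.range e = ↑S ∧
      e ⟨0, by omega⟩ = p ∧ e ⟨n - 1, by omega⟩ = q ∧
      ∀ i j : ℕ, (hij : i < j) → (hj : j < n - 1) →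
        (j = i + 1 →
          segment ℝ (e ⟨i, by omega⟩) (e ⟨i + 1, by omega⟩) ∩
            segment ℝ (e ⟨j, by omega⟩) (e ⟨j + 1, by omega⟩) = {e ⟨j, by omega⟩}) ∧
        (j ≠ i + 1 →
          segment ℝ (e ⟨i, by omega⟩) (e ⟨i + 1, by omega⟩) ∩
            segment ℝ (e ⟨j, by omega⟩) (e ⟨j + 1, by omega⟩) = ∅) := by
  classical
  obtain ⟨w, hwdef⟩ : ∃ w : Pt, w = q - p := ⟨_, rfl⟩
  have hwne : w ≠ 0 := by rw [hwdef]; exact sub_ne_zero.mpr (Ne.symm hpq)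
  have hpS : p ∈ S := by
    have := extremePoints_convexHull_subset hp; exact_mod_cast this
  have hqS : q ∈ S := by
    have := extremePoints_convexHull_subset hq; exact_mod_cast this
  have hGp : SPPaux.cr w (p - p) = 0 := by rw [sub_self]; exact SPPaux.cr_zero_right w
  have hGq : SPPaux.cr w (q - p) = 0 := by rw [hwdef]; exact SPPaux.cr_self _
  have hcr_ne : ∀ x ∈ S, ∀ y ∈ S, ∀ z ∈ S, x ≠ y → x ≠ z → y ≠ z →
      SPPaux.cr (y - x) (z - x) ≠ 0 := by
    intro x hx y hy z hz hxy hxz hyz h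
    exact hgp x (by exact_mod_cast hx) y (by exact_mod_cast hy) z (by exact_mod_cast hz)
      hxy hxz hyz (SPPaux.collinear_of_cr h)
  set L : Finset Pt := S.filter (fun x => 0 < SPPaux.cr w (x - p)) with hLdef
  set R : Finset Pt := S.filter (fun x => SPPaux.cr w (x - p) < 0) with hRdef
  have hLS : ∀ x ∈ L, x ∈ S := fun x hx => (Finset.mem_filter.mp hx).1
  have hRS : ∀ x ∈ R, x ∈ S := fun x hx => (Finset.mem_filter.mp hx).1
  have hLpos : ∀ x ∈ L, 0 < SPPaux.cr w (x - p) := fun x hx => (Finset.mem_filter.mp hx).2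
  have hRneg : ∀ x ∈ R, SPPaux.cr w (x - p) < 0 := fun x hx => (Finset.mem_filter.mp hx).2
  have hzero : ∀ x ∈ S, SPPaux.cr w (x - p) = 0 → x = p ∨ x = q := by
    intro x hx h
    by_contra hc
    push_neg at hc
    have h' : SPPaux.cr (q - p) (x - p) = 0 := by rw [← hwdef]; exact h
    exact hcr_ne p hpS q hqS x hx hpq (Ne.symm hc.1) (Ne.symm hc.2) h'
  -- cardinality
  have hsplit : S = (L ∪ R) ∪ {p, q} := by
    ext x
    simp only [Finset.mem_union, Finset.mem_insert, Finset.mem_singleton, hLdef, hRdef,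
      Finset.mem_filter]
    constructor
    · intro hx
      rcases lt_trichotomy (SPPaux.cr w (x - p)) 0 with h | h | h
      · exact Or.inl (Or.inr ⟨hx, h⟩)
      · exact Or.inr (hzero x hx h)
      · exact Or.inl (Or.inl ⟨hx, h⟩)
    · rintro ((⟨h, _⟩ | ⟨h, _⟩) | (rfl | rfl))
      · exact h
      · exact h
      · exact hpS
      · exact hqS
  have hdisj1 : Disjoint L R := by
    rw [Finset.disjoint_left]
    intro x hx hx'
    exact absurd (hRneg x hx') (not_lt.mpr (hLpos x hx).le)
  have hdisj2 : Disjoint (L ∪ R) ({p, q} : Finset Pt) := by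
    rw [Finset.disjoint_left]
    intro x hx hx'
    have hne : SPPaux.cr w (x - p) ≠ 0 := by
      rcases Finset.mem_union.mp hx with h | h
      · exact ne_of_gt (hLpos x h)
      · exact ne_of_lt (hRneg x h)
    rcases Finset.mem_insert.mp hx' with rfl | h
    · exact hne hGp
    · rw [Finset.mem_singleton.mp h] at hne
      exact hne hGq
  have hcard : n = L.card + R.card + 2 := by
    rw [← hS, hsplit, Finset.card_union_of_disjoint hdisj2,
      Finset.card_union_of_disjoint hdisj1, Finset.card_pair hpq]
  -- the left key order
  have hLne_p : ∀ x ∈ L, x ≠ p := by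
    intro x hx h
    rw [h] at hx
    exact absurd hGp (ne_of_gt (hLpos p hx))
  have hRne_p : ∀ x ∈ R, x ≠ p := by
    intro x hx h
    rw [h] at hx
    exact absurd hGp (ne_of_lt (hRneg p hx))
  have hLne_q : ∀ x ∈ L, x ≠ q := by
    intro x hx h
    rw [h] at hx
    exact absurd hGq (ne_of_gt (hLpos q hx))
  have hRne_q : ∀ x ∈ R, x ≠ q := by
    intro x hx h
    rw [h] at hx
    exact absurd hGq (ne_of_lt (hRneg q hx))
  have hLinj : Set.InjOn (SPPaux.key p w) ↑L := by
    intro x hx y hy hk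
    have hx' : x ∈ L := hx
    have hy' : y ∈ L := hy
    by_contra hne
    have hcr : SPPaux.cr (x - p) (y - p) ≠ 0 := by
      intro h
      exact hcr_ne p hpS x (hLS x hx') y (hLS y hy') (Ne.symm (hLne_p x hx'))
        (Ne.symm (hLne_p y hy')) hne h
    rcases lt_or_gt_of_ne hcr with h | h
    · have h2 : 0 < SPPaux.cr (y - p) (x - p) := by
        rw [SPPaux.cr_swap]; linarith
      have := (SPPaux.key_lt hwne (hLpos y hy') (hLpos x hx')).mpr h2
      linarith [hk.ge, hk.le, this]
    · have := (SPPaux.key_lt hwne (hLpos x hx') (hLpos y hy')).mpr h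
      linarith [this, hk.le]
  obtain ⟨fL, hfLmem, hfLsurj, hfLmono⟩ := SPPaux.exists_mono_enum L (SPPaux.key p w) hLinj
  -- the right side, around q
  obtain ⟨w', hw'def⟩ : ∃ w' : Pt, w' = p - q := ⟨_, rfl⟩
  have hw'ne : w' ≠ 0 := by rw [hw'def]; exact sub_ne_zero.mpr hpq
  have hflip : ∀ x : Pt, SPPaux.cr w' (x - q) = - SPPaux.cr w (x - p) := by
    intro x
    rw [hw'def, hwdef]
    exact SPPaux.cr_flip p q x
  have hRpos' : ∀ x ∈ R, 0 < SPPaux.cr w' (x - q) := by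
    intro x hx
    rw [hflip]
    linarith [hRneg x hx]
  have hRinj : Set.InjOn (SPPaux.key q w') ↑R := by
    intro x hx y hy hk
    have hx' : x ∈ R := hx
    have hy' : y ∈ R := hy
    by_contra hne
    have hcr : SPPaux.cr (x - q) (y - q) ≠ 0 := by
      intro h
      exact hcr_ne q hqS x (hRS x hx') y (hRS y hy') (Ne.symm (hRne_q x hx'))
        (Ne.symm (hRne_q y hy')) hne h
    rcases lt_or_gt_of_ne hcr with h | h
    · have h2 : 0 < SPPaux.cr (y - q) (x - q) := by
        rw [SPPaux.cr_swap]; linarith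
      have := (SPPaux.key_lt hw'ne (hRpos' y hy') (hRpos' x hx')).mpr h2
      linarith [hk.le, this]
    · have := (SPPaux.key_lt hw'ne (hRpos' x hx') (hRpos' y hy')).mpr h
      linarith [hk.le, this]
  obtain ⟨fR, hfRmem, hfRsurj, hfRmono⟩ := SPPaux.exists_mono_enum R (SPPaux.key q w') hRinj
  set v : ℕ → Pt := SPPaux.vtx p q L.card R.card fL fR with hvdef
  have hv0 : v 0 = p := SPPaux.vtx_zero p q L.card R.card fL fR
  have hvLf : ∀ i : ℕ, (h1 : 1 ≤ i) → (h2 : i ≤ L.card) → v i = fL ⟨L.card - i, by omega⟩ := by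
    intro i h1 h2
    exact SPPaux.vtx_L p q L.card R.card fL fR h1 h2
  have hvRf : ∀ i : ℕ, (h1 : L.card + 1 ≤ i) → (h2 : i ≤ L.card + R.card) → v i = fR ⟨i - L.card - 1, by omega⟩ := by
    intro i h1 h2
    exact SPPaux.vtx_R p q L.card R.card fL fR h1 h2
  have hvq : ∀ i : ℕ, L.card + R.card + 1 ≤ i → v i = q := by
    intro i h1
    exact SPPaux.vtx_q p q L.card R.card fL fR h1
  have hvL : ∀ i : ℕ, 1 ≤ i → i ≤ L.card → v i ∈ L := by
    intro i h1 h2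
    rw [hvLf i h1 h2]
    exact hfLmem _
  have hvR : ∀ i : ℕ, L.card + 1 ≤ i → i ≤ L.card + R.card → v i ∈ R := by
    intro i h1 h2
    rw [hvRf i h1 h2]
    exact hfRmem _
  -- order facts
  have hordL : ∀ i j : ℕ, 1 ≤ i → i < j → j ≤ L.card →
      0 < SPPaux.cr (v j - p) (v i - p) := by
    intro i j h1 h2 h3
    rw [hvLf i h1 (by omega), hvLf j (by omega) h3]
    have hlt : (⟨L.card - j, by omega⟩ : Fin L.card) < ⟨L.card - i, by omega⟩ := by
      simp only [Fin.mk_lt_mk]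
      omega
    have hkey := hfLmono _ _ hlt
    exact (SPPaux.key_lt hwne (hLpos _ (hfLmem _)) (hLpos _ (hfLmem _))).mp hkey
  have hordR : ∀ i j : ℕ, L.card + 1 ≤ i → i < j → j ≤ L.card + R.card →
      0 < SPPaux.cr (v i - q) (v j - q) := by
    intro i j h1 h2 h3
    rw [hvRf i h1 (by omega), hvRf j (by omega) h3]
    have hlt : (⟨i - L.card - 1, by omega⟩ : Fin R.card) < ⟨j - L.card - 1, by omega⟩ := by
      simp only [Fin.mk_lt_mk]
      omega
    have hkey := hfRmono _ _ hlt
    exact (SPPaux.key_lt hw'ne (hRpos' _ (hfRmem _)) (hRpos' _ (hfRmem _))).mp hkey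
  -- crossing facts
  have hcrossLR : ∀ i j : ℕ, 1 ≤ i → i ≤ L.card → L.card + 1 ≤ j → j ≤ L.card + R.card →
      SPPaux.cr (v i - p) (v j - p) < 0 ∧ SPPaux.cr (v j - q) (v i - q) < 0 := by
    intro i j h1 h2 h3 h4
    have hL := hvL i h1 h2
    have hR := hvR j h3 h4
    apply SPPaux.crossing hp hq hpq (hLS _ hL) (hRS _ hR)
    · rw [← hwdef]; exact hLpos _ hL
    · rw [← hwdef]; exact hRneg _ hR
  -- the enumeration
  refine ⟨fun i => v i.val, ?_, ?_, ?_, ?_, ?_⟩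
  · -- injective
    intro x y hxy
    have hxy : v x.val = v y.val := hxy
    have hx := x.2
    have hy := y.2
    apply Fin.ext
    have hfLinj : ∀ s t : Fin L.card, fL s = fL t → s = t := by
      intro s t h
      rcases lt_trichotomy s t with hst | hst | hst
      · exact absurd (hfLmono s t hst) (by rw [h]; exact lt_irrefl _)
      · exact hst
      · exact absurd (hfLmono t s hst) (by rw [h]; exact lt_irrefl _)
    have hfRinj : ∀ s t : Fin R.card, fR s = fR t → s = t := by
      intro s t h
      rcases lt_trichotomy s t with hst | hst | hst
      · exact absurd (hfRmono s t hst) (by rw [h]; exact lt_irrefl _)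
      · exact hst
      · exact absurd (hfRmono t s hst) (by rw [h]; exact lt_irrefl _)
    have hcls : ∀ m : ℕ, m < n → m = 0 ∨ (1 ≤ m ∧ m ≤ L.card) ∨ (L.card + 1 ≤ m ∧ m ≤ L.card + R.card) ∨
        m = L.card + R.card + 1 := by
      intro m hm
      omega
    have hGv : ∀ m : ℕ, m < n → (m = 0 ∨ m = L.card + R.card + 1 → SPPaux.cr w (v m - p) = 0) := by
      intro m hm hm'
      rcases hm' with rfl | rfl
      · rw [hv0]; exact hGp
      · rw [hvq _ (le_refl _)]; exact hGq
    rcases hcls x.val x.2 with h | h | h | h <;> rcases hcls y.val y.2 with h' | h' | h' | h'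
    · omega
    · exfalso
      have h1 := hLpos _ (hvL y.val h'.1 h'.2)
      rw [← hxy, h, hv0] at h1
      exact absurd hGp (ne_of_gt h1)
    · exfalso
      have h1 := hRneg _ (hvR y.val h'.1 h'.2)
      rw [← hxy, h, hv0] at h1
      exact absurd hGp (ne_of_lt h1)
    · exfalso
      have : v x.val = p := by rw [h, hv0]
      have h2 : v y.val = q := hvq _ (by omega)
      rw [hxy, h2] at this
      exact hpq this.symm
    · exfalso
      have h1 := hLpos _ (hvL x.val h.1 h.2)
      rw [hxy, h', hv0] at h1
      exact absurd hGp (ne_of_gt h1)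
    · -- both in L
      have e1 := hvLf x.val h.1 h.2
      have e2 := hvLf y.val h'.1 h'.2
      rw [e1, e2] at hxy
      have := hfLinj _ _ hxy
      have := Fin.mk.injEq _ _ _ _ ▸ this
      omega
    · exfalso
      have h1 := hLpos _ (hvL x.val h.1 h.2)
      have h2 := hRneg _ (hvR y.val h'.1 h'.2)
      rw [hxy] at h1
      linarith
    · exfalso
      have h1 := hLpos _ (hvL x.val h.1 h.2)
      rw [hxy, hvq _ (by omega)] at h1
      exact absurd hGq (ne_of_gt h1)
    · exfalso
      have h1 := hRneg _ (hvR x.val h.1 h.2)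
      rw [hxy, h', hv0] at h1
      exact absurd hGp (ne_of_lt h1)
    · exfalso
      have h1 := hRneg _ (hvR x.val h.1 h.2)
      have h2 := hLpos _ (hvL y.val h'.1 h'.2)
      rw [hxy] at h1
      linarith
    · -- both in R
      have e1 := hvRf x.val h.1 h.2
      have e2 := hvRf y.val h'.1 h'.2
      rw [e1, e2] at hxy
      have := hfRinj _ _ hxy
      simp only [Fin.mk.injEq] at this
      omega
    · exfalso
      have h1 := hRneg _ (hvR x.val h.1 h.2)
      rw [hxy, hvq _ (by omega)] at h1
      exact absurd hGq (ne_of_lt h1)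
    · exfalso
      have h2 : v x.val = q := hvq _ (by omega)
      have h3 : v y.val = p := by rw [h', hv0]
      rw [hxy, h3] at h2
      exact hpq h2
    · exfalso
      have h1 := hLpos _ (hvL y.val h'.1 h'.2)
      rw [← hxy, hvq _ (by omega)] at h1
      exact absurd hGq (ne_of_gt h1)
    · exfalso
      have h1 := hRneg _ (hvR y.val h'.1 h'.2)
      rw [← hxy, hvq _ (by omega)] at h1
      exact absurd hGq (ne_of_lt h1)
    · omega
  · -- range
    ext x
    simp only [Set.mem_range, Finset.coe_sort_coe, Finset.mem_coe]
    constructor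
    · rintro ⟨i, rfl⟩
      rcases (by omega : (i : ℕ) = 0 ∨ (1 ≤ (i : ℕ) ∧ (i : ℕ) ≤ L.card) ∨
          (L.card + 1 ≤ (i : ℕ) ∧ (i : ℕ) ≤ L.card + R.card) ∨ L.card + R.card + 1 ≤ (i : ℕ)) with h | h | h | h
      · rw [h, hv0]; exact hpS
      · exact hLS _ (hvL _ h.1 h.2)
      · exact hRS _ (hvR _ h.1 h.2)
      · rw [hvq _ h]; exact hqS
    · intro hx
      rcases lt_trichotomy (SPPaux.cr w (x - p)) 0 with h | h | h
      · have hxR : x ∈ R := Finset.mem_filter.mpr ⟨hx, h⟩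
        obtain ⟨s, hs⟩ := hfRsurj x hxR
        refine ⟨⟨L.card + 1 + s.val, by omega⟩, ?_⟩
        have := hvRf (L.card + 1 + s.val) (by omega) (by omega)
        simp only at this ⊢
        rw [this]
        have : (⟨L.card + 1 + s.val - L.card - 1, by omega⟩ : Fin R.card) = s := by
          apply Fin.ext
          simp only
          omega
        rw [this]
        exact hs
      · rcases hzero x hx h with rfl | rfl
        · exact ⟨⟨0, by omega⟩, hv0⟩
        · exact ⟨⟨L.card + R.card + 1, by omega⟩, hvq _ (le_refl _)⟩
      · have hxL : x ∈ L := Finset.mem_filter.mpr ⟨hx, h⟩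
        obtain ⟨s, hs⟩ := hfLsurj x hxL
        refine ⟨⟨L.card - s.val, by omega⟩, ?_⟩
        have hb1 : 1 ≤ L.card - s.val := by omega
        have hb2 : L.card - s.val ≤ L.card := by omega
        have := hvLf (L.card - s.val) hb1 hb2
        simp only at this ⊢
        rw [this]
        have : (⟨L.card - (L.card - s.val), by omega⟩ : Fin L.card) = s := by
          apply Fin.ext
          simp
          omega
        rw [this]
        exact hs
  · exact hv0
  · show v (n - 1) = q
    exact hvq _ (by omega)
  · intro i j hij hj
    have hjab : j ≤ L.card + R.card := by omega
    rcases (by omega : j ≤ L.card ∨ (L.card ≤ i) ∨ (i + 1 ≤ L.card ∧ L.card + 1 ≤ j)) with hreg | hreg | hreg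
    · -- region P : pivot p, separator at v j
      have hj1 : 1 ≤ j := by omega
      have fC : SPPaux.cr (v j - p) (v j - p) = 0 := SPPaux.cr_self _
      have fD : SPPaux.cr (v j - p) (v (j+1) - p) < 0 := by
        rcases (by omega : j + 1 ≤ L.card ∨ j = L.card) with h | h
        · have := hordL j (j+1) hj1 (by omega) h
          have hsw := SPPaux.cr_swap (v j - p) (v (j+1) - p)
          linarith
        · rcases (by omega : 1 ≤ R.card ∨ R.card = 0) with hb | hb
          · have := (hcrossLR j (j+1) hj1 (by omega) (by omega) (by omega)).1
            exact this
          · have hq' : v (j+1) = q := hvq _ (by omega)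
            rw [hq']
            have h1 := hLpos _ (hvL j hj1 (by omega))
            have hsw := SPPaux.cr_swap (v j - p) (q - p)
            rw [← hwdef] at hsw
            rw [show SPPaux.cr (v j - p) (q - p) = SPPaux.cr (v j - p) w by rw [hwdef]]
            have hsw2 := SPPaux.cr_swap (v j - p) w
            have hsw3 := SPPaux.cr_swap w (v j - p)
            linarith
      have fA : 0 ≤ SPPaux.cr (v j - p) (v i - p) := by
        rcases (by omega : i = 0 ∨ 1 ≤ i) with h | h
        · rw [h, hv0, sub_self, SPPaux.cr_zero_right]
        · exact (hordL i j h hij (by omega)).le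
      have fB : 0 ≤ SPPaux.cr (v j - p) (v (i+1) - p) := by
        rcases (by omega : i + 1 = j ∨ i + 1 < j) with h | h
        · rw [h, SPPaux.cr_self]
        · exact (hordL (i+1) j (by omega) h (by omega)).le
      have hsub := SPPaux.inter_sub fA fB fC fD
      constructor
      · intro hji
        subst hji
        refine Set.Subset.antisymm hsub ?_
        intro x hx
        rw [Set.mem_singleton_iff] at hx
        subst hx
        exact ⟨right_mem_segment ℝ _ _, left_mem_segment ℝ _ _⟩
      · intro hne
        rw [Set.eq_empty_iff_forall_notMem]
        intro x hx
        have hxj : x = v j := hsub hx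
        have hij2 : i + 1 < j := by omega
        rcases (by omega : i = 0 ∨ 1 ≤ i) with h | h
        · have hb' : SPPaux.cr (v j - p) (v (i+1) - p) ≠ 0 :=
            ne_of_gt (hordL (i+1) j (by omega) hij2 (by omega))
          have ha' : SPPaux.cr (v j - p) (v i - p) = 0 := by
            rw [h, hv0, sub_self, SPPaux.cr_zero_right]
          have hx0 : SPPaux.cr (v j - p) (x - p) = 0 := by
            rw [hxj, SPPaux.cr_self]
          have := SPPaux.seg_zero ha' hb' x hx.1 hx0
          rw [hxj, h, hv0] at this
          have h1 := hLpos _ (hvL j hj1 (by omega))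
          rw [this] at h1
          exact absurd hGp (ne_of_gt h1)
        · have := SPPaux.seg_pos (hordL i j h hij (by omega))
            (hordL (i+1) j (by omega) hij2 (by omega)) x hx.1
          rw [hxj, SPPaux.cr_self] at this
          exact lt_irrefl 0 this
    · -- region Q : pivot q, separator at v (i+1)
      have hb1 : 1 ≤ R.card := by omega
      have hi1ab : L.card + 1 ≤ i + 1 := by omega
      have fC : SPPaux.cr (v (i+1) - q) (v (i+1) - q) = 0 := SPPaux.cr_self _
      have fD : SPPaux.cr (v (i+1) - q) (v i - q) < 0 := by
        rcases (by omega : i = L.card ∨ L.card + 1 ≤ i) with h | h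
        · rcases (by omega : L.card = 0 ∨ 1 ≤ L.card) with ha | ha
          · have h0 : v i = p := by rw [h, ha, hv0]
            rw [h0]
            have hR1 := hvR (i+1) (by omega) (by omega)
            have hpos := hRpos' _ hR1
            rw [hw'def] at hpos
            have hsw := SPPaux.cr_swap (v (i+1) - q) (p - q)
            linarith
          · have := (hcrossLR i (i+1) (by omega) (by omega) (by omega) (by omega)).2
            exact this
        · have := hordR i (i+1) h (by omega) (by omega)
          have hsw := SPPaux.cr_swap (v i - q) (v (i+1) - q)
          linarith
      have fA : 0 ≤ SPPaux.cr (v (i+1) - q) (v j - q) := by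
        rcases (by omega : j = i + 1 ∨ i + 1 < j) with h | h
        · rw [h, SPPaux.cr_self]
        · exact (hordR (i+1) j hi1ab h (by omega)).le
      have fB : 0 ≤ SPPaux.cr (v (i+1) - q) (v (j+1) - q) := by
        rcases (by omega : j + 1 ≤ L.card + R.card ∨ j + 1 = L.card + R.card + 1) with h | h
        · exact (hordR (i+1) (j+1) hi1ab (by omega) h).le
        · rw [hvq (j+1) (by omega), sub_self, SPPaux.cr_zero_right]
      have hsub := SPPaux.inter_sub fA fB fC fD
      have hsub' : segment ℝ (v i) (v (i+1)) ∩ segment ℝ (v j) (v (j+1)) ⊆ {v (i+1)} := by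
        intro x hx
        exact hsub ⟨hx.2, by rw [segment_symm]; exact hx.1⟩
      constructor
      · intro hji
        subst hji
        refine Set.Subset.antisymm hsub' ?_
        intro x hx
        rw [Set.mem_singleton_iff] at hx
        subst hx
        exact ⟨right_mem_segment ℝ _ _, left_mem_segment ℝ _ _⟩
      · intro hne
        rw [Set.eq_empty_iff_forall_notMem]
        intro x hx
        have hxj : x = v (i+1) := hsub' hx
        have hij2 : i + 1 < j := by omega
        have fA' : 0 < SPPaux.cr (v (i+1) - q) (v j - q) := hordR (i+1) j hi1ab hij2 (by omega)
        rcases (by omega : j + 1 ≤ L.card + R.card ∨ j + 1 = L.card + R.card + 1) with h | h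
        · have fB' : 0 < SPPaux.cr (v (i+1) - q) (v (j+1) - q) :=
            hordR (i+1) (j+1) hi1ab (by omega) h
          have := SPPaux.seg_pos fA' fB' x hx.2
          rw [hxj, SPPaux.cr_self] at this
          exact lt_irrefl 0 this
        · have hq' : v (j+1) = q := hvq _ (by omega)
          have ha' : SPPaux.cr (v (i+1) - q) (v (j+1) - q) = 0 := by
            rw [hq', sub_self, SPPaux.cr_zero_right]
          have hb' : SPPaux.cr (v (i+1) - q) (v j - q) ≠ 0 := ne_of_gt fA'
          have hx2 : x ∈ segment ℝ (v (j+1)) (v j) := by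
            rw [segment_symm]; exact hx.2
          have hx0 : SPPaux.cr (v (i+1) - q) (x - q) = 0 := by
            rw [hxj, SPPaux.cr_self]
          have := SPPaux.seg_zero ha' hb' x hx2 hx0
          rw [hxj, hq'] at this
          have h1 := hRneg _ (hvR (i+1) hi1ab (by omega))
          rw [this] at h1
          exact absurd hGq (ne_of_lt h1)
    · -- region X : separated by the line pq
      have hi1 : i + 1 ≤ L.card := hreg.1
      have hja : L.card + 1 ≤ j := hreg.2
      have hne : j ≠ i + 1 := by omega
      constructor
      · intro hji
        exact absurd hji hne
      · intro _
        rw [Set.eq_empty_iff_forall_notMem]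
        rintro x ⟨h1, h2⟩
        have fB : 0 < SPPaux.cr w (v (i+1) - p) := hLpos _ (hvL (i+1) (by omega) hi1)
        have fA : 0 ≤ SPPaux.cr w (v i - p) := by
          rcases (by omega : i = 0 ∨ 1 ≤ i) with h | h
          · rw [h, hv0, sub_self, SPPaux.cr_zero_right]
          · exact (hLpos _ (hvL i h (by omega))).le
        have hx1 : 0 ≤ SPPaux.cr w (x - p) := SPPaux.seg_nonneg fA fB.le x h1
        have fCn : SPPaux.cr w (v j - p) < 0 := hRneg _ (hvR j hja hjab)
        rcases (by omega : j + 1 ≤ L.card + R.card ∨ j + 1 = L.card + R.card + 1) with h | h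
        · have fDn : SPPaux.cr w (v (j+1) - p) < 0 := hRneg _ (hvR (j+1) (by omega) h)
          have hx2 : SPPaux.cr w (x - p) < 0 := SPPaux.seg_neg fCn fDn x h2
          linarith
        · have hq' : v (j+1) = q := hvq _ (by omega)
          have fD0 : SPPaux.cr w (v (j+1) - p) = 0 := by rw [hq']; exact hGq
          have hx2 : SPPaux.cr w (x - p) ≤ 0 := SPPaux.seg_nonpos fCn.le fD0.le x h2
          have hx0 : SPPaux.cr w (x - p) = 0 := le_antisymm hx2 hx1
          have hx2' : x ∈ segment ℝ (v (j+1)) (v j) := by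
            rw [segment_symm]; exact h2
          have hxq : x = v (j+1) := SPPaux.seg_zero fD0 (ne_of_lt fCn) x hx2' hx0
          rw [hq'] at hxq
          rcases (by omega : i = 0 ∨ 1 ≤ i) with h0 | h0
          · have ha' : SPPaux.cr w (v i - p) = 0 := by
              rw [h0, hv0, sub_self, SPPaux.cr_zero_right]
            have hxp : x = v i := SPPaux.seg_zero ha' (ne_of_gt fB) x h1 hx0
            rw [h0, hv0] at hxp
            rw [hxp] at hxq
            exact hpq hxq
          · have := SPPaux.seg_pos (hLpos _ (hvL i h0 (by omega))) fB x h1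
            linarith
end
end

section
/- Let B and R be disjoint finite sets in ℝ² with B ∪ R in general position, every point of R lying in the interior of the convex hull of B, and |R| = l ≥ 1. Then there exists a subset B′ of the set of extreme points of the convex hull of B with |B′| ≤ 2l + 1 such that every point of R lies in the convex hull of B′. -/
open Set

noncomputable section

/-- The level set of a nonzero continuous linear functional on the plane is collinear. -/
lemma aux_collinear_level (f : Pt →L[ℝ] ℝ) (hf : f ≠ 0) (c : ℝ) :
    Collinear ℝ {x : Pt | f x = c} := by
  set a : ℝ := f (1, 0) with ha
  set b : ℝ := f (0, 1) with hb
  have hcoord : ∀ z : Pt, f z = a * z.1 + b * z.2 := by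
    intro z
    have hz : z = z.1 • ((1 : ℝ), (0 : ℝ)) + z.2 • ((0 : ℝ), (1 : ℝ)) := by
      simp [Prod.ext_iff]
    calc f z = f (z.1 • ((1 : ℝ), (0 : ℝ)) + z.2 • ((0 : ℝ), (1 : ℝ))) := by rw [← hz]
      _ = a * z.1 + b * z.2 := by
          rw [map_add, map_smul, map_smul, smul_eq_mul, smul_eq_mul]; ring
  have hab : a ≠ 0 ∨ b ≠ 0 := by
    by_contra h
    push_neg at h
    apply hf
    apply ContinuousLinearMap.ext
    intro z
    rw [hcoord z, h.1, h.2]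
    simp
  rcases Set.eq_empty_or_nonempty {x : Pt | f x = c} with he | ⟨p₀, hp₀⟩
  · rw [he]; exact collinear_empty ℝ Pt
  · rw [collinear_iff_of_mem hp₀]
    refine ⟨(-b, a), fun p hp => ?_⟩
    have hker : a * (p.1 - p₀.1) + b * (p.2 - p₀.2) = 0 := by
      have h1 : a * p.1 + b * p.2 = c := by rw [← hcoord p]; exact hp
      have h2 : a * p₀.1 + b * p₀.2 = c := by rw [← hcoord p₀]; exact hp₀
      nlinarith [h1, h2]
    rcases hab with hA | hB
    · refine ⟨(p.2 - p₀.2) / a, ?_⟩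
      have h1 : (p.2 - p₀.2) / a * (-b) + p₀.1 = p.1 := by
        field_simp
        nlinarith [hker]
      have h2 : (p.2 - p₀.2) / a * a + p₀.2 = p.2 := by field_simp; ring
      have hv : ((p.2 - p₀.2) / a) • ((-b, a) : Pt) +ᵥ p₀
          = ((p.2 - p₀.2) / a * (-b) + p₀.1, (p.2 - p₀.2) / a * a + p₀.2) := rfl
      rw [hv, Prod.ext_iff]
      exact ⟨h1.symm, h2.symm⟩
    · refine ⟨-(p.1 - p₀.1) / b, ?_⟩
      have h1 : -(p.1 - p₀.1) / b * (-b) + p₀.1 = p.1 := by field_simp; ring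
      have h2 : -(p.1 - p₀.1) / b * a + p₀.2 = p.2 := by
        field_simp
        nlinarith [hker]
      have hv : (-(p.1 - p₀.1) / b) • ((-b, a) : Pt) +ᵥ p₀
          = (-(p.1 - p₀.1) / b * (-b) + p₀.1, -(p.1 - p₀.1) / b * a + p₀.2) := rfl
      rw [hv, Prod.ext_iff]
      exact ⟨h1.symm, h2.symm⟩

/-- If a linear functional is maximized at `s` over the convex hull of a finite set, then `s`
lies in the convex hull of the points of the set achieving the maximum. -/
lemma aux_face {S : Finset Pt} {f : Pt →L[ℝ] ℝ} {c : ℝ} {s : Pt}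
    (hs : s ∈ convexHull ℝ (S : Set Pt)) (hle : ∀ y ∈ S, f y ≤ c) (hc : f s = c) :
    s ∈ convexHull ℝ {y ∈ (S : Set Pt) | f y = c} := by
  classical
  rw [Finset.convexHull_eq] at hs
  obtain ⟨w, hw0, hw1, hws⟩ := hs
  have hws' : ∑ y ∈ S, w y • y = s := by
    rw [← hws, Finset.centerMass, hw1, inv_one, one_smul]
    simp only [id_eq]
  have hfs : ∑ y ∈ S, w y * f y = c := by
    rw [← hc, ← hws', map_sum]
    simp [smul_eq_mul]
  have hsum : ∑ y ∈ S, w y * (c - f y) = 0 := by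
    have h1 : ∑ y ∈ S, w y * c = c := by rw [← Finset.sum_mul, hw1, one_mul]
    have : ∑ y ∈ S, w y * (c - f y) = (∑ y ∈ S, w y * c) - ∑ y ∈ S, w y * f y := by
      rw [← Finset.sum_sub_distrib]
      exact Finset.sum_congr rfl fun y _ => by ring
    rw [this, h1, hfs, sub_self]
  have hzero : ∀ y ∈ S, w y * (c - f y) = 0 :=
    (Finset.sum_eq_zero_iff_of_nonneg fun y hy =>
      mul_nonneg (hw0 y hy) (sub_nonneg.2 (hle y hy))).1 hsum
  set S' := S.filter (fun y => f y = c) with hS'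
  have hsub : ∀ y ∈ S, y ∉ S' → w y = 0 := by
    intro y hy hy'
    rcases mul_eq_zero.1 (hzero y hy) with h | h
    · exact h
    · exact absurd (Finset.mem_filter.2 ⟨hy, by linarith [sub_eq_zero.1 h]⟩) hy'
  have h1 : ∑ y ∈ S', w y = 1 := by
    rw [← hw1]
    exact Finset.sum_subset (Finset.filter_subset _ _) fun y hy hny => hsub y hy hny
  have hsum2 : ∑ y ∈ S', w y • y = ∑ y ∈ S, w y • y :=
    Finset.sum_subset (Finset.filter_subset _ _) fun y hy hny => by
      rw [hsub y hy hny, zero_smul]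
  have h2 : S'.centerMass w id = s := by
    rw [Finset.centerMass, h1, inv_one, one_smul]
    simp only [id_eq]
    rw [hsum2, hws']
  have hmem : S'.centerMass w id ∈ convexHull ℝ (S' : Set Pt) :=
    S'.centerMass_mem_convexHull (fun y hy => hw0 y (Finset.filter_subset _ _ hy))
      (by rw [h1]; norm_num) (fun y hy => Finset.mem_coe.2 hy)
  rw [h2] at hmem
  have : (S' : Set Pt) = {y ∈ (S : Set Pt) | f y = c} := by
    rw [hS']
    ext z
    simp
  rwa [this] at hmem

/-- Exit lemma: given `b` in the hull and `r` in the interior of the hull of `B`, there are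
two extreme points `x, y` with `r ∈ conv {b, x, y}`. -/
lemma aux_exit (B : Finset Pt) (hgp : GenPos (B : Set Pt))
    {b r : Pt} (hb : b ∈ convexHull ℝ (B : Set Pt))
    (hr : r ∈ interior (convexHull ℝ (B : Set Pt))) :
    ∃ x ∈ Set.extremePoints ℝ (convexHull ℝ (B : Set Pt)),
      ∃ y ∈ Set.extremePoints ℝ (convexHull ℝ (B : Set Pt)),
        r ∈ convexHull ℝ ({b, x, y} : Set Pt) := by
  classical
  set K := convexHull ℝ (B : Set Pt) with hK
  have hKconv : Convex ℝ K := convex_convexHull ℝ _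
  have hKcomp : IsCompact K := B.finite_toSet.isCompact_convexHull ℝ
  have hKclosed : IsClosed K := hKcomp.isClosed
  set E := K.extremePoints ℝ with hE
  have hEB : E ⊆ (B : Set Pt) := extremePoints_convexHull_subset
  have hEfin : E.Finite := B.finite_toSet.subset hEB
  have hEK : E ⊆ K := extremePoints_subset
  have hEhull : convexHull ℝ E = K := by
    have h1 : IsClosed (convexHull ℝ E) := (hEfin.isCompact_convexHull ℝ).isClosed
    have h2 := closure_convexHull_extremePoints hKcomp hKconv
    rwa [h1.closure_eq] at h2
  have hEne : E.Nonempty := hKcomp.extremePoints_nonempty ⟨b, hb⟩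
  by_cases hrb : r = b
  · obtain ⟨e, he⟩ := hEne
    exact ⟨e, he, e, he, subset_convexHull ℝ _ (by rw [hrb]; exact Set.mem_insert b _)⟩
  have hd : r - b ≠ 0 := sub_ne_zero.2 hrb
  set d := r - b with hdd
  set T := {t : ℝ | b + t • d ∈ K} with hT
  have hT1 : (1 : ℝ) ∈ T := by
    simp only [hT, Set.mem_setOf_eq, one_smul, hdd]
    rw [add_sub_cancel]
    exact interior_subset hr
  have hTbdd : BddAbove T := by
    obtain ⟨C, hC⟩ := isBounded_iff_forall_norm_le.1 hKcomp.isBounded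
    refine ⟨(C + ‖b‖) / ‖d‖, fun t ht => ?_⟩
    have h1 : ‖t • d‖ ≤ C + ‖b‖ := by
      have : ‖b + t • d‖ ≤ C := hC _ ht
      have h2 := norm_le_norm_add_norm_sub' b (b + t • d)
      calc ‖t • d‖ ≤ ‖b + t • d‖ + ‖b‖ := by
            have := norm_sub_norm_le (b + t • d) b
            have h3 : ‖(b + t • d) - b‖ = ‖t • d‖ := by rw [add_sub_cancel_left]
            linarith [norm_le_add_norm_add (t • d) b, norm_add_le b (t • d),
              norm_sub_le (b + t • d) b]
        _ ≤ C + ‖b‖ := by linarith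
    rw [norm_smul, Real.norm_eq_abs] at h1
    have hdpos : 0 < ‖d‖ := norm_pos_iff.2 hd
    rw [le_div_iff₀ hdpos]
    calc t * ‖d‖ ≤ |t| * ‖d‖ := by
          have := le_abs_self t
          nlinarith [hdpos.le]
      _ ≤ C + ‖b‖ := h1
  have hTclosed : IsClosed T := by
    have : T = (fun t : ℝ => b + t • d) ⁻¹' K := rfl
    rw [this]
    exact hKclosed.preimage (by fun_prop)
  set ts := sSup T with hts
  have htsT : ts ∈ T := hTclosed.csSup_mem ⟨1, hT1⟩ hTbdd
  have hts1 : 1 ≤ ts := le_csSup hTbdd hT1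
  have htspos : 0 < ts := lt_of_lt_of_le one_pos hts1
  set s := b + ts • d with hsdef
  have hsK : s ∈ K := htsT
  have hsint : s ∉ interior K := by
    intro h
    have hU : IsOpen ((fun t : ℝ => b + t • d) ⁻¹' interior K) :=
      isOpen_interior.preimage (by fun_prop)
    obtain ⟨ε, hε, hball⟩ := Metric.isOpen_iff.1 hU ts h
    have hmem : ts + ε / 2 ∈ T := by
      have hball' : ts + ε / 2 ∈ Metric.ball ts ε := by
        have he : ts + ε / 2 - ts = ε / 2 := by ring
        rw [Metric.mem_ball, Real.dist_eq, he, abs_of_pos (by linarith)]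
        linarith
      show b + (ts + ε / 2) • d ∈ K
      exact interior_subset (hball hball')
    have := le_csSup hTbdd hmem
    linarith
  have hseg : r ∈ segment ℝ b s := by
    rw [segment_eq_image']
    refine ⟨ts⁻¹, ⟨by positivity, inv_le_one_of_one_le₀ hts1⟩, ?_⟩
    have h1 : s - b = ts • d := by rw [hsdef]; rw [add_sub_cancel_left]
    show b + ts⁻¹ • (s - b) = r
    rw [h1, smul_smul, inv_mul_cancel₀ htspos.ne', one_smul, hdd, add_sub_cancel]
  -- separating functional at s
  obtain ⟨f, hf⟩ := geometric_hahn_banach_open_point (hKconv.interior) isOpen_interior hsint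
  have hfr : f r < f s := hf r hr
  have hle : ∀ a ∈ K, f a ≤ f s := by
    intro a haK
    by_contra h
    push_neg at h
    set θ : ℝ := (f a - f s) / (2 * (f a - f r)) with hθ
    have hafr : 0 < f a - f r := by linarith
    have hθ0 : 0 < θ := div_pos (by linarith) (by linarith)
    have hθ1 : θ < 1 := by
      rw [hθ, div_lt_one (by positivity)]
      linarith
    have hp : θ • r + (1 - θ) • a ∈ interior K :=
      hKconv.combo_interior_self_mem_interior hr haK hθ0 (by linarith) (by ring)
    have hfp := hf _ hp
    rw [map_add, map_smul, map_smul, smul_eq_mul, smul_eq_mul] at hfp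
    have hcalc : θ * (f a - f r) = (f a - f s) / 2 := by
      rw [hθ]
      field_simp
    nlinarith [hfp, hcalc]
  have hfne : f ≠ 0 := by
    intro h0
    rw [h0] at hfr
    simp at hfr
  -- s lies in hull of extreme points on the max face
  have hsE : s ∈ convexHull ℝ E := by rw [hEhull]; exact hsK
  have hsE' : s ∈ convexHull ℝ (hEfin.toFinset : Set Pt) := by
    rwa [hEfin.coe_toFinset]
  have hface := aux_face hsE' (fun y hy => hle y (hEK (hEfin.mem_toFinset.1 hy))) rfl
  set E₁ := {y ∈ (hEfin.toFinset : Set Pt) | f y = f s} with hE₁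
  have hE₁E : E₁ ⊆ E := fun z hz => hEfin.mem_toFinset.1 hz.1
  have hE₁lev : E₁ ⊆ {x : Pt | f x = f s} := fun z hz => hz.2
  have hcol : Collinear ℝ {x : Pt | f x = f s} := aux_collinear_level f hfne (f s)
  have hE₁ne : E₁.Nonempty := by
    by_contra h
    rw [Set.not_nonempty_iff_eq_empty] at h
    rw [h, convexHull_empty] at hface
    exact hface
  obtain ⟨x, hx⟩ := hE₁ne
  by_cases hxo : E₁ ⊆ {x}
  · have hsx : s = x := by
      have := convexHull_mono hxo hface
      rwa [convexHull_singleton, Set.mem_singleton_iff] at this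
    refine ⟨x, hE₁E hx, x, hE₁E hx, ?_⟩
    have hsub : segment ℝ b s ⊆ convexHull ℝ ({b, x, x} : Set Pt) := by
      apply (convex_convexHull ℝ _).segment_subset
      · exact subset_convexHull ℝ _ (Set.mem_insert _ _)
      · rw [hsx]
        exact subset_convexHull ℝ _ (by simp)
    exact hsub hseg
  · obtain ⟨y, hy, hyx'⟩ := Set.not_subset.1 hxo
    have hyx : y ≠ x := by simpa using hyx'
    have hE₁sub : E₁ ⊆ {x, y} := by
      intro z hz
      by_contra hz'
      simp only [Set.mem_insert_iff, Set.mem_singleton_iff, not_or] at hz'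
      have hcol3 : Collinear ℝ ({x, y, z} : Set Pt) :=
        hcol.subset (by
          intro w hw
          rcases hw with h | h | h
          · rw [h]; exact hE₁lev hx
          · rw [h]; exact hE₁lev hy
          · rw [h]; exact hE₁lev hz)
      exact hgp x (hEB (hE₁E hx)) y (hEB (hE₁E hy)) z (hEB (hE₁E hz))
        (Ne.symm hyx) (Ne.symm hz'.1) (Ne.symm hz'.2) hcol3
    have hsxy : s ∈ convexHull ℝ ({x, y} : Set Pt) := convexHull_mono hE₁sub hface
    refine ⟨x, hE₁E hx, y, hE₁E hy, ?_⟩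
    have hsub : segment ℝ b s ⊆ convexHull ℝ ({b, x, y} : Set Pt) := by
      apply (convex_convexHull ℝ _).segment_subset
      · exact subset_convexHull ℝ _ (Set.mem_insert _ _)
      · exact convexHull_mono (by intro w hw; simp at hw ⊢; tauto) hsxy
    exact hsub hseg

/-- Main induction: `n` interior points can be covered by `2n+1` extreme points. -/
lemma aux_main (B : Finset Pt) (hgp : GenPos (B : Set Pt))
    {r₀ : Pt} (hr₀ : r₀ ∈ interior (convexHull ℝ (B : Set Pt))) :
    ∀ n : ℕ, ∀ R : Finset Pt, R.card ≤ n →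
      (∀ r ∈ R, r ∈ interior (convexHull ℝ (B : Set Pt))) →
      ∃ B' : Set Pt, B' ⊆ Set.extremePoints ℝ (convexHull ℝ (B : Set Pt)) ∧ B'.Nonempty ∧
        B'.ncard ≤ 2 * n + 1 ∧ ∀ r ∈ R, r ∈ convexHull ℝ B' := by
  intro n
  induction n with
  | zero =>
    intro R hR _
    have hRe : R = ∅ := Finset.card_eq_zero.1 (Nat.le_zero.1 hR)
    have hKcomp : IsCompact (convexHull ℝ (B : Set Pt)) := B.finite_toSet.isCompact_convexHull ℝ
    obtain ⟨e, he⟩ := hKcomp.extremePoints_nonempty ⟨r₀, interior_subset hr₀⟩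
    refine ⟨{e}, by simpa using he, ⟨e, rfl⟩, by simp, ?_⟩
    intro r hr
    rw [hRe] at hr
    exact absurd hr (Finset.notMem_empty r)
  | succ n ih =>
    intro R hR hRint
    by_cases hc : R.card ≤ n
    · obtain ⟨B', h1, h2, h3, h4⟩ := ih R hc hRint
      exact ⟨B', h1, h2, by omega, h4⟩
    · have hRne : R.Nonempty := Finset.card_pos.1 (by omega)
      obtain ⟨r, hrR⟩ := hRne
      obtain ⟨B', hB'E, ⟨b, hbB'⟩, hcard, hcov⟩ :=
        ih (R.erase r) (by rw [Finset.card_erase_of_mem hrR]; omega)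
          (fun x hx => hRint x (Finset.mem_of_mem_erase hx))
      have hbK : b ∈ convexHull ℝ (B : Set Pt) := (hB'E hbB').1
      obtain ⟨x, hx, y, hy, hrxy⟩ := aux_exit B hgp hbK (hRint r hrR)
      refine ⟨insert x (insert y B'), ?_, ⟨x, Set.mem_insert _ _⟩, ?_, ?_⟩
      · exact Set.insert_subset hx (Set.insert_subset hy hB'E)
      · calc (insert x (insert y B')).ncard ≤ (insert y B').ncard + 1 :=
              Set.ncard_insert_le _ _
          _ ≤ B'.ncard + 1 + 1 := by linarith [Set.ncard_insert_le y B']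
          _ ≤ 2 * (n + 1) + 1 := by omega
      · intro z hz
        by_cases hzr : z = r
        · rw [hzr]
          refine convexHull_mono ?_ hrxy
          intro w hw
          rcases hw with h | h | h
          · rw [h]; exact Set.mem_insert_iff.2 (Or.inr (Set.mem_insert_iff.2 (Or.inr hbB')))
          · rw [h]; exact Set.mem_insert _ _
          · rw [h]; exact Set.mem_insert_iff.2 (Or.inr (Set.mem_insert _ _))
        · exact convexHull_mono
            (fun w hw => Set.mem_insert_iff.2 (Or.inr (Set.mem_insert_iff.2 (Or.inr hw))))
            (hcov z (Finset.mem_erase.2 ⟨hzr, hz⟩))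

/-- **Smaller hull (Proposition 5).** If all `l ≥ 1` red points lie in the interior of the
convex hull of `B`, then some set `B'` of at most `2l + 1` extreme points of the hull of `B`
already has all red points in its convex hull. -/
theorem smaller_hull (B R : Finset Pt) (hdisj : Disjoint B R) (hgp : GenPos ↑(B ∪ R))
    (hint : ∀ r ∈ R, r ∈ interior (convexHull ℝ (B : Set Pt)))
    (l : ℕ) (hl : R.card = l) (hl1 : 1 ≤ l) :
    ∃ B' : Set Pt, B' ⊆ Set.extremePoints ℝ (convexHull ℝ (B : Set Pt)) ∧
      B'.ncard ≤ 2 * l + 1 ∧ ∀ r ∈ R, r ∈ convexHull ℝ B' := by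
  have hgpB : GenPos (B : Set Pt) := by
    intro p hp q hq r hr h1 h2 h3
    exact hgp p (by simp at hp ⊢; tauto) q (by simp at hq ⊢; tauto)
      r (by simp at hr ⊢; tauto) h1 h2 h3
  have hRne : R.Nonempty := Finset.card_pos.1 (by omega)
  obtain ⟨r₀, hr₀R⟩ := hRne
  obtain ⟨B', h1, _, h3, h4⟩ := aux_main B hgpB (hint r₀ hr₀R) l R (le_of_eq hl) hint
  exact ⟨B', h1, h3, h4⟩
end
end

section
/- For every n ≥ 1 there exist disjoint sets B and R of n points each in ℝ² with B ∪ R in general position such that every simple closed polygonal curve that encloses every point of R and excludes every point of B has at least n vertices. -/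
open Set

noncomputable section

/-- quadratic aux: three distinct parameters on a line hitting the unit circle force zero direction -/
lemma circ_quad_aux {x y u w t₁ t₂ t₃ : ℝ}
    (h12 : t₁ ≠ t₂) (h13 : t₁ ≠ t₃) (h23 : t₂ ≠ t₃)
    (e1 : (x + t₁*u)^2 + (y + t₁*w)^2 = 1)
    (e2 : (x + t₂*u)^2 + (y + t₂*w)^2 = 1)
    (e3 : (x + t₃*u)^2 + (y + t₃*w)^2 = 1) : u = 0 ∧ w = 0 := by
  have h1 : ((u^2+w^2)*(t₁+t₂) + 2*(x*u+y*w)) * (t₁ - t₂) = 0 := by linear_combination e1 - e2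
  have h2 : ((u^2+w^2)*(t₁+t₃) + 2*(x*u+y*w)) * (t₁ - t₃) = 0 := by linear_combination e1 - e3
  have h1' := (mul_eq_zero.1 h1).resolve_right (sub_ne_zero.2 h12)
  have h2' := (mul_eq_zero.1 h2).resolve_right (sub_ne_zero.2 h13)
  have h3 : (u^2+w^2) * (t₂ - t₃) = 0 := by linear_combination h1' - h2'
  have huw : u^2+w^2 = 0 := (mul_eq_zero.1 h3).resolve_right (sub_ne_zero.2 h23)
  constructor <;> nlinarith [sq_nonneg u, sq_nonneg w]

def onCirc (p : Pt) : Prop := p.1^2 + p.2^2 = 1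

/-- no three distinct collinear points on the unit circle -/
lemma no_three_collinear {p q r : Pt} (hp : onCirc p) (hq : onCirc q) (hr : onCirc r)
    (hpq : p ≠ q) (hpr : p ≠ r) (hqr : q ≠ r) : ¬ Collinear ℝ ({p,q,r} : Set Pt) := by
  intro hc
  rw [collinear_iff_of_mem (Set.mem_insert p _)] at hc
  obtain ⟨d, hd⟩ := hc
  obtain ⟨t₂, ht₂⟩ := hd q (by simp)
  obtain ⟨t₃, ht₃⟩ := hd r (by simp)
  have hq1 : q.1 = p.1 + t₂ * d.1 := by rw [ht₂]; simp [Prod.ext_iff]; ring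
  have hq2 : q.2 = p.2 + t₂ * d.2 := by rw [ht₂]; simp [Prod.ext_iff]; ring
  have hr1 : r.1 = p.1 + t₃ * d.1 := by rw [ht₃]; simp [Prod.ext_iff]; ring
  have hr2 : r.2 = p.2 + t₃ * d.2 := by rw [ht₃]; simp [Prod.ext_iff]; ring
  have h02 : (0:ℝ) ≠ t₂ := by
    rintro rfl; exact hpq (by apply Prod.ext <;> simp [hq1, hq2])
  have h03 : (0:ℝ) ≠ t₃ := by
    rintro rfl; exact hpr (by apply Prod.ext <;> simp [hr1, hr2])
  have h23 : t₂ ≠ t₃ := by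
    rintro rfl; exact hqr (by apply Prod.ext <;> simp [hq1, hq2, hr1, hr2])
  have e1 : (p.1 + 0*d.1)^2 + (p.2 + 0*d.2)^2 = 1 := by simpa [onCirc] using hp
  have e2 : (p.1 + t₂*d.1)^2 + (p.2 + t₂*d.2)^2 = 1 := by rw [← hq1, ← hq2]; exact hq
  have e3 : (p.1 + t₃*d.1)^2 + (p.2 + t₃*d.2)^2 = 1 := by rw [← hr1, ← hr2]; exact hr
  obtain ⟨hu, hw⟩ := circ_quad_aux (x := p.1) (y := p.2) (u := d.1) (w := d.2)
    h02 h03 h23 e1 e2 e3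
  exact hpq (Prod.ext (by rw [hq1, hu]; ring) (by rw [hq2, hw]; ring))

/-- segment membership gives an affine parameter -/
lemma seg_param {a b z : Pt} (hz : z ∈ segment ℝ a b) :
    ∃ t : ℝ, z.1 = a.1 + t * (b.1 - a.1) ∧ z.2 = a.2 + t * (b.2 - a.2) := by
  obtain ⟨u, v, hu, hv, huv, h⟩ := hz
  refine ⟨v, ?_, ?_⟩
  · have : z.1 = u * a.1 + v * b.1 := by rw [← h]; simp
    rw [this]; linear_combination a.1 * huv
  · have : z.2 = u * a.2 + v * b.2 := by rw [← h]; simp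
    rw [this]; linear_combination a.2 * huv

/-- no three distinct points of a segment lie on the unit circle -/
lemma seg_three {a b x y z : Pt} (hx : x ∈ segment ℝ a b) (hy : y ∈ segment ℝ a b)
    (hz : z ∈ segment ℝ a b) (hxy : x ≠ y) (hxz : x ≠ z) (hyz : y ≠ z)
    (cx : onCirc x) (cy : onCirc y) (cz : onCirc z) : False := by
  obtain ⟨t₁, hx1, hx2⟩ := seg_param hx
  obtain ⟨t₂, hy1, hy2⟩ := seg_param hy
  obtain ⟨t₃, hz1, hz2⟩ := seg_param hz
  have h12 : t₁ ≠ t₂ := by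
    rintro rfl; exact hxy (Prod.ext (by rw [hx1, hy1]) (by rw [hx2, hy2]))
  have h13 : t₁ ≠ t₃ := by
    rintro rfl; exact hxz (Prod.ext (by rw [hx1, hz1]) (by rw [hx2, hz2]))
  have h23 : t₂ ≠ t₃ := by
    rintro rfl; exact hyz (Prod.ext (by rw [hy1, hz1]) (by rw [hy2, hz2]))
  obtain ⟨hu, hw⟩ := circ_quad_aux (x := a.1) (y := a.2) (u := b.1 - a.1) (w := b.2 - a.2)
    h12 h13 h23
    (by rw [← hx1, ← hx2]; exact cx) (by rw [← hy1, ← hy2]; exact cy)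
    (by rw [← hz1, ← hz2]; exact cz)
  exact hxy (Prod.ext (by rw [hx1, hy1, hu]; ring) (by rw [hx2, hy2, hw]; ring))

def cpt (θ : ℝ) : Pt := (Real.cos θ, Real.sin θ)

lemma onCirc_cpt (θ : ℝ) : onCirc (cpt θ) := by
  have := Real.sin_sq_add_cos_sq θ
  simp only [onCirc, cpt]
  linarith

lemma cpt_injOn {a b : ℝ} (ha0 : 0 ≤ a) (ha : a < 2*Real.pi) (hb0 : 0 ≤ b)
    (hb : b < 2*Real.pi) (h : cpt a = cpt b) : a = b := by
  rw [cpt, cpt, Prod.mk.injEq] at h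
  obtain ⟨h1, h2⟩ := h
  have hc : Real.cos (a - b) = 1 := by
    rw [Real.cos_sub, h1, h2]
    nlinarith [Real.sin_sq_add_cos_sq b]
  have := (Real.cos_eq_one_iff_of_lt_of_lt (by linarith) (by linarith)).1 hc
  linarith

/-- **Red–blue separation, lower bound (Theorem 5, second part).** For every `n ≥ 1` there
are disjoint sets `B` and `R` of `n` points each with `B ∪ R` in general position such that
every simple closed polygonal curve enclosing every red point and excluding every blue point
has at least `n` vertices. -/
theorem red_blue_separation_lower_bound (n : ℕ) (hn : 1 ≤ n) :
    ∃ B R : Finset Pt, Disjoint B R ∧ B.card = n ∧ R.card = n ∧ GenPos ↑(B ∪ R) ∧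
      ∀ (m : ℕ) (v : Fin m → Pt), IsSimplePolygon v →
        (∀ r ∈ R, Encloses v r) → (∀ b ∈ B, Excludes v b) → n ≤ m := by
  classical
  have hπ : 0 < Real.pi := Real.pi_pos
  have hn0 : (0:ℝ) < n := by exact_mod_cast hn
  set δ : ℝ := Real.pi / n with hδdef
  have hδ : 0 < δ := div_pos hπ hn0
  have h2nδ : ((2*n : ℕ):ℝ) * δ = 2 * Real.pi := by
    rw [hδdef]; push_cast; field_simp
  set P : ℕ → Pt := fun k => cpt (k * δ) with hP
  have hlt : ∀ k : ℕ, k < 2*n → (k:ℝ) * δ < 2*Real.pi := by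
    intro k hk
    rw [← h2nδ]
    exact mul_lt_mul_of_pos_right (by exact_mod_cast hk) hδ
  have hle : ∀ k : ℕ, k ≤ 2*n → (k:ℝ) * δ ≤ 2*Real.pi := by
    intro k hk
    rw [← h2nδ]
    exact mul_le_mul_of_nonneg_right (by exact_mod_cast hk) hδ.le
  have hPinj : ∀ k l : ℕ, k < 2*n → l < 2*n → P k = P l → k = l := by
    intro k l hk hl h
    have h' := cpt_injOn (by positivity) (hlt k hk) (by positivity) (hlt l hl) h
    have : (k:ℝ) = l := mul_right_cancel₀ hδ.ne' h'
    exact_mod_cast this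
  set Bs : Finset Pt := (Finset.range n).image (fun k => P (2*k+1)) with hBs
  set Rs : Finset Pt := (Finset.range n).image (fun k => P (2*k)) with hRs
  have hP2n : P (2*n) = P 0 := by
    simp only [hP]
    rw [h2nδ]
    simp [cpt, Real.cos_two_pi, Real.sin_two_pi]
  have hmemR : ∀ k : ℕ, k ≤ 2*n → Even k → P k ∈ Rs := by
    intro k hk hke
    have hk2 := Nat.even_iff.1 hke
    rcases eq_or_lt_of_le hk with rfl|hklt
    · rw [hP2n, hRs]
      exact Finset.mem_image.2 ⟨0, Finset.mem_range.2 (by omega), by norm_num⟩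
    · obtain ⟨j, rfl⟩ : ∃ j, k = 2*j := ⟨k/2, by omega⟩
      exact Finset.mem_image.2 ⟨j, Finset.mem_range.2 (by omega), rfl⟩
  have hmemB : ∀ k : ℕ, k ≤ 2*n → ¬ Even k → P k ∈ Bs := by
    intro k hk hke
    have hk2 := Nat.not_even_iff.1 hke
    obtain ⟨j, rfl⟩ : ∃ j, k = 2*j+1 := ⟨k/2, by omega⟩
    exact Finset.mem_image.2 ⟨j, Finset.mem_range.2 (by omega), rfl⟩
  refine ⟨Bs, Rs, ?_, ?_, ?_, ?_, ?_⟩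
  · -- disjointness
    rw [Finset.disjoint_left]
    rintro p hpB hpR
    obtain ⟨k, hk, rfl⟩ := Finset.mem_image.1 hpB
    obtain ⟨l, hl, h⟩ := Finset.mem_image.1 hpR
    rw [Finset.mem_range] at hk hl
    have := hPinj (2*l) (2*k+1) (by omega) (by omega) h
    omega
  · -- card B
    rw [hBs, Finset.card_image_of_injOn, Finset.card_range]
    intro a ha b hb h
    rw [Finset.mem_coe, Finset.mem_range] at ha hb
    have := hPinj (2*a+1) (2*b+1) (by omega) (by omega) h
    omega
  · -- card R
    rw [hRs, Finset.card_image_of_injOn, Finset.card_range]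
    intro a ha b hb h
    rw [Finset.mem_coe, Finset.mem_range] at ha hb
    have := hPinj (2*a) (2*b) (by omega) (by omega) h
    omega
  · -- general position
    have honc : ∀ p ∈ (Bs ∪ Rs : Finset Pt), onCirc p := by
      intro p hp
      rcases Finset.mem_union.1 hp with h|h <;>
      · obtain ⟨j, _, rfl⟩ := Finset.mem_image.1 h
        exact onCirc_cpt _
    intro p hp q hq r hr hpq hpr hqr
    exact no_three_collinear (honc p hp) (honc q hq) (honc r hr) hpq hpr hqr
  · -- main lower bound
    intro m v _hsp hRenc hBexc
    have hstat : ∀ k : ℕ, k ≤ 2*n → P k ∉ polyCurve v ∧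
        (Even k → Bornology.IsBounded (connectedComponentIn (polyCurve v)ᶜ (P k))) ∧
        (¬ Even k → ¬ Bornology.IsBounded (connectedComponentIn (polyCurve v)ᶜ (P k))) := by
      intro k hk
      by_cases he : Even k
      · have h := hRenc _ (hmemR k hk he)
        exact ⟨h.1, fun _ => h.2, fun h' => absurd he h'⟩
      · have h := hBexc _ (hmemB k hk he)
        exact ⟨h.1, fun h' => absurd h' he, fun _ => h.2⟩
    -- every arc meets the curve
    have harc : ∀ k : Fin (2*n), ∃ θ : ℝ,
        ((k:ℕ):ℝ) * δ < θ ∧ θ < (((k:ℕ):ℝ)+1) * δ ∧ cpt θ ∈ polyCurve v := by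
      intro k
      by_contra hcon
      push_neg at hcon
      set S : Set Pt := cpt '' Set.Icc (((k:ℕ):ℝ)*δ) ((((k:ℕ):ℝ)+1)*δ) with hS
      have hcc : Continuous cpt := Real.continuous_cos.prodMk Real.continuous_sin
      have hSconn : IsPreconnected S := isPreconnected_Icc.image _ hcc.continuousOn
      have hkmem : (((k:ℕ):ℝ)*δ) ≤ ((((k:ℕ):ℝ)+1)*δ) := by nlinarith
      have hkP : P (k:ℕ) ∈ S :=
        ⟨((k:ℕ):ℝ)*δ, Set.mem_Icc.2 ⟨le_refl _, hkmem⟩, rfl⟩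
      have hk1P : P ((k:ℕ)+1) ∈ S := by
        refine ⟨(((k:ℕ):ℝ)+1)*δ, Set.mem_Icc.2 ⟨hkmem, le_refl _⟩, ?_⟩
        simp only [hP]
        push_cast
        rfl
      have hk2n : (k:ℕ) ≤ 2*n := le_of_lt k.2
      have hk12n : (k:ℕ)+1 ≤ 2*n := k.2
      have hSsub : S ⊆ (polyCurve v)ᶜ := by
        rintro _ ⟨θ, hθ, rfl⟩
        rcases eq_or_lt_of_le hθ.1 with h|h
        · rw [← h]
          exact (hstat _ hk2n).1
        rcases eq_or_lt_of_le hθ.2 with h'|h'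
        · rw [h']
          have := (hstat _ hk12n).1
          simp only [hP] at this
          push_cast at this
          exact this
        · exact hcon θ h h'
      have hsub2 := hSconn.subset_connectedComponentIn hkP hSsub
      have heq := connectedComponentIn_eq (hsub2 hk1P)
      by_cases he : Even (k:ℕ)
      · have hb1 := (hstat _ hk2n).2.1 he
        have hb2 := (hstat _ hk12n).2.2 (by simp [Nat.even_add_one, he])
        rw [← heq] at hb2
        exact hb2 hb1
      · have hb1 := (hstat _ hk2n).2.2 he
        have hb2 := (hstat _ hk12n).2.1 (by simp [Nat.even_add_one, he])
        rw [← heq] at hb2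
        exact hb1 hb2
    choose θf h1 h2 h3 using harc
    have hedge : ∀ k : Fin (2*n), ∃ i : Fin m, cpt (θf k) ∈ polyEdge v i :=
      fun k => Set.mem_iUnion.1 (h3 k)
    choose e he using hedge
    have hθrange : ∀ k : Fin (2*n), 0 ≤ θf k ∧ θf k < 2*Real.pi := by
      intro k
      have a1 := h1 k
      have a2 := h2 k
      have b1 : (0:ℝ) ≤ ((k:ℕ):ℝ)*δ := by positivity
      have b2 : ((((k:ℕ)+1 : ℕ)):ℝ)*δ ≤ 2*Real.pi := hle _ k.2
      push_cast at b2
      exact ⟨by linarith, by linarith⟩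
    have hxinj : ∀ k l : Fin (2*n), cpt (θf k) = cpt (θf l) → k = l := by
      intro k l h
      have hθ := cpt_injOn (hθrange k).1 (hθrange k).2 (hθrange l).1 (hθrange l).2 h
      have a1 := h1 k
      have a2 := h2 l
      have b1 := h1 l
      have b2 := h2 k
      rw [hθ] at a1
      rw [← hθ] at b1
      have c1 : ((k:ℕ):ℝ) < ((l:ℕ):ℝ) + 1 := by
        have := a1.trans a2
        nlinarith
      have c2 : ((l:ℕ):ℝ) < ((k:ℕ):ℝ) + 1 := by
        have := b1.trans b2
        nlinarith
      have d1 : (k:ℕ) < (l:ℕ) + 1 := by exact_mod_cast c1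
      have d2 : (l:ℕ) < (k:ℕ) + 1 := by exact_mod_cast c2
      exact Fin.ext (by omega)
    have hfib : ∀ i : Fin m, (Finset.univ.filter (fun k => e k = i)).card ≤ 2 := by
      intro i
      by_contra hgt
      push_neg at hgt
      obtain ⟨a, b, c, ha, hb, hc, hab, hac, hbc⟩ := Finset.two_lt_card_iff.1 hgt
      rw [Finset.mem_filter] at ha hb hc
      have hha := he a; rw [ha.2] at hha
      have hhb := he b; rw [hb.2] at hhb
      have hhc := he c; rw [hc.2] at hhc
      exact seg_three hha hhb hhc
        (fun h => hab (hxinj a b h)) (fun h => hac (hxinj a c h))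
        (fun h => hbc (hxinj b c h))
        (onCirc_cpt _) (onCirc_cpt _) (onCirc_cpt _)
    have hcard := Finset.card_le_mul_card_image_of_maps_to
      (f := e) (s := Finset.univ) (t := Finset.univ)
      (fun a _ => Finset.mem_univ _) 2 (fun b _ => hfib b)
    simp only [Finset.card_univ, Fintype.card_fin] at hcard
    omega
end
end

section
/- Let B and R be disjoint finite sets in ℝ² with B ∪ R in general position, |R| = 1 with the unique point of R lying in the interior of the convex hull of B, the convex hull of B having at least 3 extreme points, and at least one point of B lying in the interior of the convex hull of B. Then there exists a polygonization of B that excludes the point of R. -/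
open Set

noncomputable section

section PolyAuxiliary

open Complex

local notation "π" => Real.pi

/-- Angle of a complex number, normalized in `(0, 2π]`. -/
def Ang (c : ℂ) : ℝ := if 0 < c.arg then c.arg else c.arg + 2*π

lemma Ang_pos (c : ℂ) : 0 < Ang c := by
  unfold Ang; split
  · assumption
  · nlinarith [Complex.neg_pi_lt_arg c, Real.pi_pos]

lemma Ang_le (c : ℂ) : Ang c ≤ 2*π := by
  unfold Ang; split
  · nlinarith [Complex.arg_le_pi c, Real.pi_pos]
  · next h => push_neg at h; linarith

lemma abs_exp_Ang (c : ℂ) : (‖c‖ : ℂ) * Complex.exp (Ang c * I) = c := by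
  unfold Ang; split
  · exact Complex.norm_mul_exp_arg_mul_I c
  · have : ((c.arg + 2*π : ℝ) : ℂ) * I = c.arg * I + 2*π*I := by push_cast; ring
    rw [this, Complex.exp_add, Complex.exp_two_pi_mul_I, mul_one,
      Complex.norm_mul_exp_arg_mul_I c]

lemma re_eq_Ang (c : ℂ) : c.re = ‖c‖ * Real.cos (Ang c) := by
  conv_lhs => rw [← abs_exp_Ang c]
  rw [Complex.re_ofReal_mul]
  norm_cast
  rw [Complex.exp_ofReal_mul_I_re]

lemma im_eq_Ang (c : ℂ) : c.im = ‖c‖ * Real.sin (Ang c) := by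
  conv_lhs => rw [← abs_exp_Ang c]
  rw [Complex.im_ofReal_mul]
  norm_cast
  rw [Complex.exp_ofReal_mul_I_im]

lemma cross_eq_Ang (c d : ℂ) :
    ((starRingEnd ℂ) c * d).im = ‖c‖ * ‖d‖ * Real.sin (Ang d - Ang c) := by
  rw [Complex.mul_im, Complex.conj_re, Complex.conj_im, Real.sin_sub,
    re_eq_Ang c, im_eq_Ang c, re_eq_Ang d, im_eq_Ang d]
  ring

lemma dot_eq_Ang (c d : ℂ) :
    ((starRingEnd ℂ) c * d).re = ‖c‖ * ‖d‖ * Real.cos (Ang d - Ang c) := by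
  rw [Complex.mul_re, Complex.conj_re, Complex.conj_im, Real.cos_sub,
    re_eq_Ang c, im_eq_Ang c, re_eq_Ang d, im_eq_Ang d]
  ring

lemma dot_exp_eq (φ : ℝ) (d : ℂ) :
    (Complex.exp (-(φ:ℝ) * I) * d).re = ‖d‖ * Real.cos (Ang d - φ) := by
  rw [Complex.mul_re]
  rw [show (-(φ:ℂ)) * I = ((-φ : ℝ) : ℂ) * I by push_cast; ring]
  rw [Complex.exp_ofReal_mul_I_re, Complex.exp_ofReal_mul_I_im, Real.cos_sub,
    re_eq_Ang d, im_eq_Ang d, Real.cos_neg, Real.sin_neg]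
  ring

lemma Ang_real_mul {s : ℝ} (hs : 0 < s) (c : ℂ) : Ang ((s:ℂ) * c) = Ang c := by
  unfold Ang; rw [Complex.arg_real_mul c hs]

lemma Ang_pos_real {t : ℝ} (ht : 0 ≤ t) : Ang (t : ℂ) = 2*π := by
  unfold Ang
  rw [Complex.arg_ofReal_of_nonneg ht]
  simp

lemma sin_nonneg_cases {x : ℝ} (h1 : -(2*π) < x) (h2 : x < 2*π) (h : 0 ≤ Real.sin x) :
    (x ≤ -π) ∨ (0 ≤ x ∧ x ≤ π) := by
  rcases lt_or_ge x 0 with hx | hx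
  · rcases le_or_gt x (-π) with h' | h'
    · exact Or.inl h'
    · exact absurd h (not_le.2 (Real.sin_neg_of_neg_of_neg_pi_lt hx h'))
  · rcases le_or_gt x π with h' | h'
    · exact Or.inr ⟨hx, h'⟩
    · exfalso
      have h3 : Real.sin (x - π) > 0 :=
        Real.sin_pos_of_pos_of_lt_pi (by linarith) (by linarith)
      rw [Real.sin_sub] at h3
      simp at h3
      linarith

lemma cos_pos_cases {x : ℝ} (h1 : -(2*π) < x) (h2 : x < 2*π) (h : 0 < Real.cos x) :
    (-(π/2) < x ∧ x < π/2) ∨ (3*π/2 < x) ∨ (x < -(3*π/2)) := by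
  by_contra hc
  push_neg at hc
  obtain ⟨hA, hB, hC⟩ := hc
  -- x ∈ [-3π/2, -π/2] ∪ [π/2, 3π/2]
  rcases le_or_gt (π/2) x with hx | hx
  · have := Real.cos_nonpos_of_pi_div_two_le_of_le hx (by linarith)
    linarith
  · have hx2 : x ≤ -(π/2) := by
      by_contra h'
      push_neg at h'
      exact absurd (hA h') (not_le.2 hx)
    have h3 : π/2 ≤ -x := by linarith
    have h4 : -x ≤ π + π/2 := by linarith
    have := Real.cos_nonpos_of_pi_div_two_le_of_le h3 h4
    rw [Real.cos_neg] at this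
    linarith

/-- gap < π from positive cross + angular order -/
lemma gap_lt_pi {c1 c2 : ℂ} (hlt : Ang c1 < Ang c2)
    (hcross : 0 < ((starRingEnd ℂ) c1 * c2).im) : Ang c2 - Ang c1 < π := by
  by_contra hge
  push_neg at hge
  have hD2 : Ang c2 - Ang c1 < 2*π := by
    have := Ang_pos c1; have := Ang_le c2; linarith
  rcases eq_or_lt_of_le hge with he | hgt
  · rw [cross_eq_Ang, ← he] at hcross
    simp [Real.sin_pi] at hcross
  · have hs : Real.sin (Ang c2 - Ang c1) > 0 := by
      rw [cross_eq_Ang] at hcross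
      by_contra hns
      push_neg at hns
      nlinarith [mul_nonneg (norm_nonneg c1) (norm_nonneg c2)]
    have h3 : Real.sin ((Ang c2 - Ang c1) - π) > 0 :=
      Real.sin_pos_of_pos_of_lt_pi (by linarith) (by linarith)
    rw [Real.sin_sub] at h3
    simp at h3
    linarith

lemma sector_mem {c1 c2 c : ℂ} (h1 : c1 ≠ 0) (h2 : c2 ≠ 0)
    (hlt : Ang c1 < Ang c2)
    (hcross : 0 < ((starRingEnd ℂ) c1 * c2).im)
    {s : ℝ} (hs0 : 0 ≤ s) (hs1 : s ≤ 1)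
    (hc : c = (1 - s) * c1 + s * c2) :
    c ≠ 0 ∧ Ang c1 ≤ Ang c ∧ Ang c ≤ Ang c2 ∧
      (Ang c = Ang c1 → s = 0) ∧ (Ang c = Ang c2 → s = 1) := by
  have hgap := gap_lt_pi hlt hcross
  have cross1 : ((starRingEnd ℂ) c1 * c).im = s * ((starRingEnd ℂ) c1 * c2).im := by
    rw [hc]
    simp only [mul_add, Complex.add_im, Complex.mul_im, Complex.mul_re, Complex.add_re,
      Complex.conj_re, Complex.conj_im, Complex.sub_re, Complex.sub_im, Complex.ofReal_re,
      Complex.ofReal_im, Complex.one_re, Complex.one_im]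
    ring
  have cross2 : ((starRingEnd ℂ) c * c2).im = (1 - s) * ((starRingEnd ℂ) c1 * c2).im := by
    rw [hc]
    simp only [map_add, map_mul, map_sub, map_one, Complex.conj_ofReal]
    simp only [add_mul, Complex.add_im, Complex.mul_im, Complex.mul_re, Complex.add_re,
      Complex.conj_re, Complex.conj_im, Complex.sub_re, Complex.sub_im, Complex.ofReal_re,
      Complex.ofReal_im, Complex.one_re, Complex.one_im]
    ring
  have hcne : c ≠ 0 := by
    intro h0
    rw [h0] at cross1
    simp only [mul_zero, Complex.zero_im] at cross1
    have hs' : s = 0 := by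
      rcases mul_eq_zero.mp cross1.symm with h | h
      · exact h
      · exact absurd h (ne_of_gt hcross)
    rw [hs', h0] at hc
    push_cast at hc
    simp at hc
    exact h1 hc.symm
  have habs1 : 0 < ‖c1‖ := norm_pos_iff.mpr h1
  have habs2 : 0 < ‖c2‖ := norm_pos_iff.mpr h2
  have habsc : 0 < ‖c‖ := norm_pos_iff.mpr hcne
  have hd1 : 0 ≤ Real.sin (Ang c - Ang c1) := by
    have : 0 ≤ ((starRingEnd ℂ) c1 * c).im := by rw [cross1]; positivity
    rw [cross_eq_Ang] at this
    nlinarith [mul_pos habs1 habsc]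
  have hd2 : 0 ≤ Real.sin (Ang c2 - Ang c) := by
    have : 0 ≤ ((starRingEnd ℂ) c * c2).im := by rw [cross2]; nlinarith
    rw [cross_eq_Ang] at this
    nlinarith [mul_pos habsc habs2]
  have b1 := Ang_pos c1; have b2 := Ang_le c1
  have b3 := Ang_pos c2; have b4 := Ang_le c2
  have b5 := Ang_pos c; have b6 := Ang_le c
  have k1 := sin_nonneg_cases (x := Ang c - Ang c1) (by linarith) (by linarith) hd1
  have k2 := sin_nonneg_cases (x := Ang c2 - Ang c) (by linarith) (by linarith) hd2
  have hord : Ang c1 ≤ Ang c ∧ Ang c ≤ Ang c2 := by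
    rcases k1 with k1 | k1 <;> rcases k2 with k2 | k2 <;>
      first
      | (exact ⟨by linarith, by linarith⟩)
      | (exfalso; linarith)
  refine ⟨hcne, hord.1, hord.2, ?_, ?_⟩
  · intro he
    have : ((starRingEnd ℂ) c1 * c).im = 0 := by
      rw [cross_eq_Ang, he]; simp
    rw [cross1, cross_eq_Ang] at this
    have hsin : 0 < Real.sin (Ang c2 - Ang c1) := Real.sin_pos_of_pos_of_lt_pi (by linarith) hgap
    rcases mul_eq_zero.mp this with h | h
    · exact h
    · exfalso; nlinarith [mul_pos (mul_pos habs1 habs2) hsin]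
  · intro he
    have : ((starRingEnd ℂ) c * c2).im = 0 := by
      rw [cross_eq_Ang, he]; simp
    rw [cross2, cross_eq_Ang] at this
    have hsin : 0 < Real.sin (Ang c2 - Ang c1) := Real.sin_pos_of_pos_of_lt_pi (by linarith) hgap
    rcases mul_eq_zero.mp this with h | h
    · linarith
    · exfalso; nlinarith [mul_pos (mul_pos habs1 habs2) hsin]

/-- If consecutive directions have negative cross (reflex wedge), any direction with
positive dot against the mid-angle direction lies strictly between them. -/
lemma between_of_cross_neg {c1 c2 d : ℂ} (h1 : c1 ≠ 0) (h2 : c2 ≠ 0) (hd : d ≠ 0)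
    (hlt : Ang c1 < Ang c2) (hneg : ((starRingEnd ℂ) c1 * c2).im < 0)
    (hdot : 0 < (Complex.exp (-(((Ang c1 + Ang c2)/2 : ℝ)) * I) * d).re) :
    Ang c1 < Ang d ∧ Ang d < Ang c2 := by
  have b1 := Ang_pos c1; have b2 := Ang_le c1
  have b3 := Ang_pos c2; have b4 := Ang_le c2
  have b5 := Ang_pos d; have b6 := Ang_le d
  have hpi := Real.pi_pos
  -- Δ ∈ (π, 2π)
  have hDgt : π < Ang c2 - Ang c1 := by
    rcases lt_trichotomy (Ang c2 - Ang c1) π with h | h | h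
    · exfalso
      have : 0 ≤ Real.sin (Ang c2 - Ang c1) :=
        Real.sin_nonneg_of_nonneg_of_le_pi (by linarith) (by linarith)
      rw [cross_eq_Ang] at hneg
      nlinarith [mul_pos (norm_pos_iff.mpr h1) (norm_pos_iff.mpr h2)]
    · exfalso
      rw [cross_eq_Ang, h] at hneg
      simp [Real.sin_pi] at hneg
    · exact h
  rw [dot_exp_eq] at hdot
  have hcos : 0 < Real.cos (Ang d - (Ang c1 + Ang c2)/2) := by
    nlinarith [norm_pos_iff.mpr hd]
  have := cos_pos_cases (x := Ang d - (Ang c1 + Ang c2)/2) (by linarith) (by linarith) hcos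
  rcases this with ⟨hA, hB⟩ | h | h
  · constructor <;> linarith
  · exfalso; linarith
  · exfalso; linarith

/-- cross product vanishing implies collinearity in the plane. -/
lemma collinear_of_cross_eq_zero {p q s : Pt}
    (h : (q.1 - p.1) * (s.2 - p.2) - (q.2 - p.2) * (s.1 - p.1) = 0) :
    Collinear ℝ ({p, q, s} : Set Pt) := by
  by_cases hq : q = p
  · subst hq
    have : ({q, q, s} : Set Pt) = {q, s} := by
      simp [Set.insert_comm, Set.pair_comm]
    rw [this]
    exact collinear_pair ℝ q s
  · rw [collinear_iff_of_mem (Set.mem_insert p {q, s})]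
    refine ⟨q - p, ?_⟩
    intro x hx
    rcases hx with rfl | rfl | rfl
    · exact ⟨0, by simp⟩
    · exact ⟨1, by simp⟩
    · by_cases h1 : q.1 - p.1 ≠ 0
      · refine ⟨(x.1 - p.1)/(q.1 - p.1), ?_⟩
        have key : (x.1 - p.1) * (q.2 - p.2) = (x.2 - p.2) * (q.1 - p.1) := by
          linear_combination -h
        refine Prod.ext_iff.mpr ⟨?_, ?_⟩
        · show x.1 = (x.1 - p.1)/(q.1 - p.1) * (q.1 - p.1) + p.1
          rw [div_mul_cancel₀ _ h1]; ring
        · show x.2 = (x.1 - p.1)/(q.1 - p.1) * (q.2 - p.2) + p.2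
          rw [div_mul_eq_mul_div, key, mul_div_cancel_right₀ _ h1]; ring
      · push_neg at h1
        have h2 : q.2 - p.2 ≠ 0 := by
          intro h2
          exact hq (Prod.ext_iff.mpr ⟨by linarith, by linarith⟩)
        refine ⟨(x.2 - p.2)/(q.2 - p.2), ?_⟩
        have hx1 : x.1 - p.1 = 0 := by
          have hz : (q.2 - p.2) * (x.1 - p.1) = 0 := by
            linear_combination (x.2 - p.2) * h1 - h
          rcases mul_eq_zero.mp hz with h' | h'
          · exact absurd h' h2
          · exact h'
        refine Prod.ext_iff.mpr ⟨?_, ?_⟩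
        · show x.1 = (x.2 - p.2)/(q.2 - p.2) * (q.1 - p.1) + p.1
          rw [h1]; simp; linarith
        · show x.2 = (x.2 - p.2)/(q.2 - p.2) * (q.2 - p.2) + p.2
          rw [div_mul_cancel₀ _ h2]; ring

/-- From an interior point of the hull, every open half-plane direction contains a point. -/
lemma exists_pos_dot {B : Finset Pt} {b : Pt}
    (hb : b ∈ interior (convexHull ℝ (B : Set Pt))) {m : ℂ} (hm : m ≠ 0) :
    ∃ w ∈ B, 0 < m.re * (w.1 - b.1) + m.im * (w.2 - b.2) := by
  by_contra hc
  push_neg at hc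
  set S : Set Pt := {x | m.re * (x.1 - b.1) + m.im * (x.2 - b.2) ≤ 0} with hS
  have hconv : Convex ℝ S := by
    intro x hx y hy a c ha hc' hac
    simp only [hS, Set.mem_setOf_eq] at hx hy ⊢
    have e1 : (a • x + c • y).1 = a * x.1 + c * y.1 := rfl
    have e2 : (a • x + c • y).2 = a * x.2 + c * y.2 := rfl
    rw [e1, e2]
    have hkey : m.re * (a * x.1 + c * y.1 - b.1) + m.im * (a * x.2 + c * y.2 - b.2)
        = a * (m.re * (x.1 - b.1) + m.im * (x.2 - b.2))
          + c * (m.re * (y.1 - b.1) + m.im * (y.2 - b.2)) := by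
      linear_combination (m.re * b.1 + m.im * b.2) * hac
    rw [hkey]
    have hx' : a * (m.re * (x.1 - b.1) + m.im * (x.2 - b.2)) ≤ 0 := by nlinarith
    have hy' : c * (m.re * (y.1 - b.1) + m.im * (y.2 - b.2)) ≤ 0 := by nlinarith
    linarith
  have hsub : (B : Set Pt) ⊆ S := fun w hw => hc w hw
  have hhull : convexHull ℝ (B : Set Pt) ⊆ S := convexHull_min hsub hconv
  have hbS : b ∈ interior S := interior_mono hhull hb
  have hmm : 0 < m.re^2 + m.im^2 := by
    by_contra hle
    push_neg at hle
    have hre : m.re = 0 := by nlinarith [sq_nonneg m.re, sq_nonneg m.im]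
    have him : m.im = 0 := by nlinarith [sq_nonneg m.re, sq_nonneg m.im]
    exact hm (Complex.ext (by simpa using hre) (by simpa using him))
  have hM : 0 < |m.re| + |m.im| := by
    nlinarith [abs_nonneg m.re, abs_nonneg m.im, _root_.sq_abs m.re, _root_.sq_abs m.im,
      mul_nonneg (abs_nonneg m.re) (abs_nonneg m.im)]
  rw [mem_interior_iff_mem_nhds] at hbS
  rcases Metric.mem_nhds_iff.mp hbS with ⟨ε, hε, hball⟩
  set M := |m.re| + |m.im| with hMdef
  set δ := ε / (2*M) with hδdef
  have hδ : 0 < δ := by positivity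
  have hδM : δ * M = ε/2 := by
    rw [hδdef]; field_simp
  set x₀ : Pt := (b.1 + δ*m.re, b.2 + δ*m.im) with hx₀def
  have hx₀ : x₀ ∈ Metric.ball b ε := by
    rw [Metric.mem_ball, Prod.dist_eq]
    apply max_lt
    · have e : dist x₀.1 b.1 = |δ * m.re| := by
        rw [Real.dist_eq]; congr 1; simp [hx₀def]
      rw [e, abs_mul, abs_of_pos hδ]
      nlinarith [abs_nonneg m.im, abs_nonneg m.re]
    · have e : dist x₀.2 b.2 = |δ * m.im| := by
        rw [Real.dist_eq]; congr 1; simp [hx₀def]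
      rw [e, abs_mul, abs_of_pos hδ]
      nlinarith [abs_nonneg m.im, abs_nonneg m.re]
  have hmem := hball hx₀
  simp only [hS, Set.mem_setOf_eq, hx₀def] at hmem
  nlinarith [mul_pos hδ hmm]

/-- The plane as complex numbers. -/
def zz (p : Pt) : ℂ := ⟨p.1, p.2⟩

@[simp] lemma zz_re (p : Pt) : (zz p).re = p.1 := rfl
@[simp] lemma zz_im (p : Pt) : (zz p).im = p.2 := rfl

lemma zz_inj {p q : Pt} (h : zz p = zz q) : p = q := by
  rw [Complex.ext_iff] at h
  exact Prod.ext_iff.mpr ⟨h.1, h.2⟩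

lemma zz_comb (a c : ℝ) (p q : Pt) :
    zz (a • p + c • q) = (a : ℂ) * zz p + (c : ℂ) * zz q := by
  apply Complex.ext <;>
    simp [zz, Complex.add_re, Complex.add_im, Complex.mul_re, Complex.mul_im]

lemma zz_ray (b w : Pt) (t : ℝ) : zz (b + t • (w - b)) = zz b + (t : ℂ) * (zz w - zz b) := by
  apply Complex.ext <;>
    simp [zz, Complex.add_re, Complex.add_im, Complex.mul_re, Complex.mul_im,
      Complex.sub_re, Complex.sub_im] <;> ring

lemma ucross {ρ : ℂ} (hρ : ρ ≠ 0) (b p q' : Pt) :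
    ((starRingEnd ℂ) ((zz p - zz b) * ρ⁻¹) * ((zz q' - zz b) * ρ⁻¹)).im
      = ((p.1 - b.1) * (q'.2 - b.2) - (p.2 - b.2) * (q'.1 - b.1)) * (Complex.normSq ρ)⁻¹ := by
  have ht : ρ.re * ρ.re + ρ.im * ρ.im ≠ 0 := by
    have := Complex.normSq_pos.mpr hρ
    rw [Complex.normSq_apply] at this
    exact ne_of_gt this
  rw [Complex.inv_def]
  simp only [map_mul, Complex.mul_im, Complex.mul_re, Complex.conj_re, Complex.conj_im,
    Complex.sub_re, Complex.sub_im, zz_re, zz_im, Complex.ofReal_re, Complex.ofReal_im,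
    Complex.inv_re, Complex.inv_im, Complex.normSq_apply]
  have ht' : ρ.re ^ 2 + ρ.im ^ 2 ≠ 0 := by rw [sq, sq]; exact ht
  field_simp
  ring

lemma uim (b w : Pt) (ρ : ℂ) :
    ((zz w - zz b) * ρ⁻¹).im
      = (ρ.re * (w.2 - b.2) - ρ.im * (w.1 - b.1)) * (Complex.normSq ρ)⁻¹ := by
  rw [Complex.inv_def]
  simp only [Complex.mul_im, Complex.mul_re, Complex.conj_re, Complex.conj_im,
    Complex.sub_re, Complex.sub_im, zz_re, zz_im, Complex.ofReal_re, Complex.ofReal_im,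
    Complex.normSq_apply]
  ring

set_option maxHeartbeats 2000000 in
/-- **`K(1) = 1`.** If `B ∪ R` is in general position, `R` consists of a single point lying
in the interior of the convex hull of `B`, the hull of `B` has at least `3` extreme points,
and at least one point of `B` lies in the interior of the hull of `B`, then some
polygonization of `B` excludes the red point. -/
theorem total_polygonization_one_red (B R : Finset Pt) (hdisj : Disjoint B R)
    (hgp : GenPos ↑(B ∪ R)) (hR : R.card = 1)
    (hint : ∀ r ∈ R, r ∈ interior (convexHull ℝ (B : Set Pt)))
    (hhull : 3 ≤ (Set.extremePoints ℝ (convexHull ℝ (B : Set Pt))).ncard)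
    (hk : 1 ≤ {b ∈ (B : Set Pt) | b ∈ interior (convexHull ℝ (B : Set Pt))}.ncard) :
    ∃ (m : ℕ) (v : Fin m → Pt), IsSimplePolygon v ∧ Set.range v = ↑B ∧
      ∀ r ∈ R, Excludes v r := by
  classical
  obtain ⟨r, hRr⟩ := Finset.card_eq_one.mp hR
  have hkne : {b ∈ (B:Set Pt) | b ∈ interior (convexHull ℝ (B:Set Pt))}.Nonempty := by
    by_contra h
    rw [Set.not_nonempty_iff_eq_empty] at h
    rw [h] at hk
    simp at hk
  obtain ⟨b, hbB, hbint⟩ := hkne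
  have hbBf : b ∈ B := hbB
  have hrR : r ∈ R := by rw [hRr]; exact Finset.mem_singleton_self r
  have hrB : r ∉ B := fun h => (Finset.disjoint_left.mp hdisj h) hrR
  have hbr : b ≠ r := fun h => hrB (h ▸ hbBf)
  have hBcard : 3 ≤ B.card := by
    have hsub := extremePoints_convexHull_subset (𝕜 := ℝ) (A := (B : Set Pt))
    have h2 := Set.ncard_le_ncard hsub (B.finite_toSet)
    rw [Set.ncard_coe_finset] at h2
    omega
  set n := B.card with hn
  have hn3 : 3 ≤ n := hBcard
  -- general position in cross-product form
  have hgp' : ∀ p q s : Pt, p ∈ B ∪ R → q ∈ B ∪ R → s ∈ B ∪ R → p ≠ q → p ≠ s → q ≠ s →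
      (q.1 - p.1) * (s.2 - p.2) - (q.2 - p.2) * (s.1 - p.1) ≠ 0 := by
    intro p q s hp hq hs h1 h2 h3 hz
    exact hgp p (by simpa using hp) q (by simpa using hq) s (by simpa using hs) h1 h2 h3
      (collinear_of_cross_eq_zero hz)
  set ρ : ℂ := zz r - zz b with hρdef
  have hρne : ρ ≠ 0 := sub_ne_zero.mpr (fun h => hbr (zz_inj h).symm)
  have hnormSq : (0:ℝ) < Complex.normSq ρ := Complex.normSq_pos.mpr hρne
  set u : Pt → ℂ := fun p => (zz p - zz b) * ρ⁻¹ with hudef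
  have huz : ∀ x : Pt, u x = 0 ↔ x = b := by
    intro x
    rw [hudef]
    simp only [mul_eq_zero, inv_eq_zero, sub_eq_zero]
    constructor
    · rintro (h | h)
      · exact zz_inj h
      · exact absurd h hρne
    · intro h; exact Or.inl (by rw [h])
  have hub : u b = 0 := (huz b).mpr rfl
  -- u of a segment point
  have huseg : ∀ (s : ℝ) (p q' : Pt), u ((1-s) • p + s • q') = (1-(s:ℂ)) * u p + (s:ℂ) * u q' := by
    intro s p q'
    rw [hudef]
    simp only []
    rw [zz_comb]
    push_cast
    ring
  -- u on the ray through r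
  have huray : ∀ t : ℝ, u (b + t • (r - b)) = (t:ℂ) := by
    intro t
    rw [hudef]
    simp only []
    rw [zz_ray]
    field_simp
    rw [hρdef]; ring
  have hur : u r = 1 := by
    have := huray 1
    simpa using this
  -- the angular key
  set key : Pt → ℝ := fun p => Ang (u p) with hkeydef
  letI : DecidableRel (fun p q : Pt => key p ≤ key q) := fun _ _ => Real.decidableLE _ _
  haveI instTot : IsTotal Pt (fun p q => key p ≤ key q) := ⟨fun _ _ => le_total _ _⟩
  haveI instTrans : IsTrans Pt (fun p q => key p ≤ key q) := ⟨fun _ _ _ => le_trans⟩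
  set l : List Pt := List.insertionSort (fun p q => key p ≤ key q) (B.erase b).toList with hldef
  have hperm : List.Perm l (B.erase b).toList := List.perm_insertionSort _ _
  have hsortl : l.Pairwise (fun p q => key p ≤ key q) := List.pairwise_insertionSort _ _
  have hnodup : l.Nodup := hperm.nodup_iff.mpr (Finset.nodup_toList _)
  have hmeml : ∀ x, x ∈ l ↔ x ∈ B.erase b := fun x => (hperm.mem_iff).trans (Finset.mem_toList)
  have hllen : l.length = n - 1 := by
    rw [hperm.length_eq, Finset.length_toList, Finset.card_erase_of_mem hbBf]
  have hbl : b ∉ l := fun h => (Finset.mem_erase.mp ((hmeml b).mp h)).1 rfl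
  set L : List Pt := b :: l with hLdef
  have hLlen : L.length = n := by
    rw [hLdef, List.length_cons, hllen]
    omega
  have hLnodup : L.Nodup := List.nodup_cons.mpr ⟨hbl, hnodup⟩
  set q : ℕ → Pt := fun j => L.getD j b with hqdef
  have hq0 : q 0 = b := rfl
  set v : Fin n → Pt := fun i => L.get ⟨i.val, by rw [hLlen]; exact i.2⟩ with hvdef
  have hvq : ∀ i : Fin n, v i = q i.val := by
    intro i
    rw [hvdef, hqdef]
    simp only []
    exact (List.getD_eq_getElem L b (by rw [hLlen]; exact i.2)).symm
  have hql : ∀ j : ℕ, (h : j < n - 1) → q (j+1) = l.get ⟨j, by rw [hllen]; exact h⟩ := by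
    intro j h
    rw [hqdef]
    simp only []
    rw [hLdef]
    rw [List.getD_cons_succ]
    exact List.getD_eq_getElem l b (by rw [hllen]; exact h)
  have hqmem : ∀ j : ℕ, 1 ≤ j → j ≤ n - 1 → q j ∈ B.erase b := by
    intro j h1 h2
    obtain ⟨j', rfl⟩ : ∃ j', j = j' + 1 := ⟨j - 1, by omega⟩
    rw [hql j' (by omega)]
    exact (hmeml _).mp (List.get_mem _ _)
  have hqB : ∀ j : ℕ, j ≤ n - 1 → q j ∈ B := by
    intro j hj
    rcases Nat.eq_zero_or_pos j with h | h
    · rw [h, hq0]; exact hbBf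
    · exact Finset.mem_of_mem_erase (hqmem j h hj)
  have hqne : ∀ j : ℕ, 1 ≤ j → j ≤ n - 1 → q j ≠ b :=
    fun j h1 h2 => (Finset.mem_erase.mp (hqmem j h1 h2)).1
  have hqsurj : ∀ w ∈ B.erase b, ∃ j : ℕ, 1 ≤ j ∧ j ≤ n - 1 ∧ q j = w := by
    intro w hw
    obtain ⟨m, hm⟩ := List.mem_iff_get.mp ((hmeml w).mpr hw)
    refine ⟨m.val + 1, by omega, by have := m.2; omega, ?_⟩
    rw [hql m.val (by rw [← hllen]; exact m.2)]
    convert hm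
  -- nonvanishing of u on blue points other than b
  have hune : ∀ w ∈ B.erase b, u w ≠ 0 :=
    fun w hw h => (Finset.mem_erase.mp hw).1 ((huz w).mp h)
  -- key is injective on B.erase b
  have hkeyinj : ∀ w ∈ B.erase b, ∀ w' ∈ B.erase b, key w = key w' → w = w' := by
    intro w hw w' hw' hkk
    by_contra hne
    have hcr : ((starRingEnd ℂ) (u w) * u w').im = 0 := by
      rw [cross_eq_Ang]
      have hkk' : Ang (u w) = Ang (u w') := hkk
      rw [hkk']
      simp
    rw [hudef] at hcr
    simp only [] at hcr
    rw [ucross hρne] at hcr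
    have hz : (w.1 - b.1) * (w'.2 - b.2) - (w.2 - b.2) * (w'.1 - b.1) = 0 := by
      rcases mul_eq_zero.mp hcr with h | h
      · exact h
      · exact absurd h (by positivity)
    obtain ⟨hw1, hw2⟩ := Finset.mem_erase.mp hw
    obtain ⟨hw1', hw2'⟩ := Finset.mem_erase.mp hw'
    exact hgp' b w w' (Finset.mem_union_left _ hbBf) (Finset.mem_union_left _ hw2)
      (Finset.mem_union_left _ hw2') (Ne.symm hw1) (Ne.symm hw1') hne hz
  -- sin of key is nonzero on B.erase b  (not collinear with the ray to r)
  have hsinne : ∀ w ∈ B.erase b, Real.sin (key w) ≠ 0 := by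
    intro w hw hs
    obtain ⟨hw1, hw2⟩ := Finset.mem_erase.mp hw
    have him : (u w).im = 0 := by
      rw [im_eq_Ang]
      have hs' : Real.sin (Ang (u w)) = 0 := hs
      rw [hs']
      simp
    rw [hudef] at him
    simp only [] at him
    rw [uim] at him
    have hz : ρ.re * (w.2 - b.2) - ρ.im * (w.1 - b.1) = 0 := by
      rcases mul_eq_zero.mp him with h | h
      · exact h
      · exact absurd h (by positivity)
    have hz' : (r.1 - b.1) * (w.2 - b.2) - (r.2 - b.2) * (w.1 - b.1) = 0 := by
      rw [hρdef] at hz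
      simpa using hz
    exact hgp' b r w (Finset.mem_union_left _ hbBf) (Finset.mem_union_right _ hrR)
      (Finset.mem_union_left _ hw2) (Ne.symm hbr).symm (Ne.symm hw1) 
      (fun h => hrB (h ▸ (Finset.mem_of_mem_erase hw))) hz'
  have hkeylt : ∀ w ∈ B.erase b, key w < 2*π := by
    intro w hw
    rcases lt_or_eq_of_le (Ang_le (u w)) with h | h
    · exact h
    · exfalso
      apply hsinne w hw
      show Real.sin (Ang (u w)) = 0
      rw [h]
      exact Real.sin_two_pi
  -- strict sortedness
  have hstrict : ∀ i j : ℕ, 1 ≤ i → i < j → j ≤ n - 1 → key (q i) < key (q j) := by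
    intro i j h1 hij h2
    obtain ⟨i', rfl⟩ : ∃ i', i = i' + 1 := ⟨i - 1, by omega⟩
    obtain ⟨j', rfl⟩ : ∃ j', j = j' + 1 := ⟨j - 1, by omega⟩
    have hi' : i' < n - 1 := by omega
    have hj' : j' < n - 1 := by omega
    rw [hql i' hi', hql j' hj']
    have hle := List.pairwise_iff_get.mp hsortl ⟨i', by rw [hllen]; exact hi'⟩
      ⟨j', by rw [hllen]; exact hj'⟩ (by simp only [Fin.mk_lt_mk]; omega)
    rcases lt_or_eq_of_le hle with h | h
    · exact h
    · exfalso
      have hww := hkeyinj _ ((hmeml _).mp (List.get_mem _ _)) _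
        ((hmeml _).mp (List.get_mem _ _)) h
      have := (List.Nodup.get_inj_iff hnodup).mp hww
      simp only [Fin.mk.injEq] at this
      omega
  -- key-between nothing for consecutive indices
  have hconsec : ∀ j : ℕ, 1 ≤ j → j + 1 ≤ n - 1 → ∀ w ∈ B.erase b,
      ¬(key (q j) < key w ∧ key w < key (q (j+1))) := by
    intro j h1 h2 w hw ⟨hlo, hhi⟩
    obtain ⟨m, hm1, hm2, rfl⟩ := hqsurj w hw
    rcases le_or_gt m j with h | h
    · rcases lt_or_eq_of_le h with h' | h'
      · exact absurd (hstrict m j hm1 h' (by omega)) (by linarith)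
      · rw [h'] at hlo; exact lt_irrefl _ hlo
    · have : key (q (j+1)) ≤ key (q m) := by
        rcases lt_or_eq_of_le (Nat.succ_le_of_lt h) with h' | h'
        · exact le_of_lt (hstrict (j+1) m (by omega) h' hm2)
        · exact le_of_eq (congrArg (fun t => key (q t)) h')
      linarith
  -- positive cross for consecutive vertices
  have CROSS : ∀ j : ℕ, 1 ≤ j → j + 1 ≤ n - 1 →
      0 < ((starRingEnd ℂ) (u (q j)) * u (q (j+1))).im := by
    intro j h1 h2
    have hq1 := hqmem j h1 (by omega)
    have hq2 := hqmem (j+1) (by omega) h2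
    have hc1 : u (q j) ≠ 0 := hune _ hq1
    have hc2 : u (q (j+1)) ≠ 0 := hune _ hq2
    have hlt : Ang (u (q j)) < Ang (u (q (j+1))) := hstrict j (j+1) h1 (by omega) h2
    have hqq : q j ≠ q (j+1) := fun h => absurd (congrArg key h) (ne_of_lt hlt)
    rcases lt_trichotomy (((starRingEnd ℂ) (u (q j)) * u (q (j+1))).im) 0 with hneg | hzero | hpos
    · -- reflex wedge: find a vertex inside, contradiction
      exfalso
      set φ : ℝ := (Ang (u (q j)) + Ang (u (q (j+1))))/2 with hφdef
      set g : ℂ := Complex.exp (-(φ:ℝ) * I) * ρ⁻¹ with hgdef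
      have hgne : g ≠ 0 := mul_ne_zero (Complex.exp_ne_zero _) (inv_ne_zero hρne)
      have hmne : (starRingEnd ℂ) g ≠ 0 := by
        simpa using hgne
      obtain ⟨w, hwB, hw⟩ := exists_pos_dot hbint hmne
      have hwb : w ≠ b := by
        intro h
        rw [h] at hw
        simp at hw
      have hwE : w ∈ B.erase b := Finset.mem_erase.mpr ⟨hwb, hwB⟩
      have hdot : 0 < (Complex.exp (-(φ:ℝ) * I) * u w).re := by
        have he : Complex.exp (-(φ:ℝ) * I) * u w = (starRingEnd ℂ) ((starRingEnd ℂ) g) * (zz w - zz b) := by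
          rw [Complex.conj_conj, hgdef, hudef]
          ring
        rw [he]
        have hre : ((starRingEnd ℂ) ((starRingEnd ℂ) g) * (zz w - zz b)).re
            = ((starRingEnd ℂ) g).re * (w.1 - b.1) + ((starRingEnd ℂ) g).im * (w.2 - b.2) := by
          simp only [Complex.mul_re, Complex.conj_re, Complex.conj_im, Complex.sub_re,
            Complex.sub_im, zz_re, zz_im]
          ring
        rw [hre]
        exact hw
      have hbet := between_of_cross_neg hc1 hc2 (hune _ hwE) hlt hneg hdot
      exact hconsec j h1 h2 w hwE ⟨hbet.1, hbet.2⟩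
    · exfalso
      rw [hudef] at hzero
      simp only [] at hzero
      rw [ucross hρne] at hzero
      have hz : ((q j).1 - b.1) * ((q (j+1)).2 - b.2) - ((q j).2 - b.2) * ((q (j+1)).1 - b.1) = 0 := by
        rcases mul_eq_zero.mp hzero with h | h
        · exact h
        · exact absurd h (by positivity)
      exact hgp' b (q j) (q (j+1)) (Finset.mem_union_left _ hbBf)
        (Finset.mem_union_left _ (hqB j (by omega))) (Finset.mem_union_left _ (hqB (j+1) h2))
        (Ne.symm (hqne j h1 (by omega))) (Ne.symm (hqne (j+1) (by omega) h2)) hqq hz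
    · exact hpos
  -- middle edge lemma
  have MEL : ∀ j : ℕ, 1 ≤ j → j + 1 ≤ n - 1 → ∀ x ∈ segment ℝ (q j) (q (j+1)),
      u x ≠ 0 ∧ key (q j) ≤ Ang (u x) ∧ Ang (u x) ≤ key (q (j+1)) ∧
      (Ang (u x) = key (q j) → x = q j) ∧ (Ang (u x) = key (q (j+1)) → x = q (j+1)) := by
    intro j h1 h2 x hx
    rw [segment_eq_image] at hx
    obtain ⟨s, hs01, rfl⟩ := hx
    have hc := huseg s (q j) (q (j+1))
    have hres := sector_mem (hune _ (hqmem j h1 (by omega))) (hune _ (hqmem (j+1) (by omega) h2))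
      (hstrict j (j+1) h1 (by omega) h2) (CROSS j h1 h2) hs01.1 hs01.2 hc
    refine ⟨hres.1, hres.2.1, hres.2.2.1, ?_, ?_⟩
    · intro he
      have hs0 := hres.2.2.2.1 he
      rw [hs0]
      simp
    · intro he
      have hs1 := hres.2.2.2.2 he
      rw [hs1]
      simp
  -- first edge lemma
  have EEL0 : ∀ x ∈ segment ℝ b (q 1), x = b ∨ (u x ≠ 0 ∧ Ang (u x) = key (q 1)) := by
    intro x hx
    rw [segment_eq_image] at hx
    obtain ⟨s, hs01, rfl⟩ := hx
    rcases eq_or_lt_of_le hs01.1 with h0 | h0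
    · left
      rw [← h0]
      simp
    · right
      have hux : u ((1-s) • b + s • q 1) = (s:ℂ) * u (q 1) := by
        rw [huseg, hub]
        ring
      have hq1 : u (q 1) ≠ 0 := hune _ (hqmem 1 le_rfl (by omega))
      constructor
      · rw [hux]
        exact mul_ne_zero (by exact_mod_cast ne_of_gt h0) hq1
      · rw [hux]
        exact Ang_real_mul h0 _
  -- last edge lemma
  have EELn : ∀ x ∈ segment ℝ (q (n-1)) b, x = b ∨ (u x ≠ 0 ∧ Ang (u x) = key (q (n-1))) := by
    intro x hx
    rw [segment_eq_image] at hx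
    obtain ⟨s, hs01, rfl⟩ := hx
    rcases eq_or_lt_of_le hs01.2 with h1 | h1
    · left
      rw [h1]
      simp
    · right
      have hux : u ((1-s) • q (n-1) + s • b) = ((1-s : ℝ):ℂ) * u (q (n-1)) := by
        rw [huseg, hub]
        push_cast
        ring
      have hq1 : u (q (n-1)) ≠ 0 := hune _ (hqmem (n-1) (by omega) le_rfl)
      constructor
      · rw [hux]
        refine mul_ne_zero ?_ hq1
        exact_mod_cast ne_of_gt (by linarith : (0:ℝ) < 1 - s)
      · rw [hux]
        exact Ang_real_mul (by linarith) _
  -- edges in terms of q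
  have hedge : ∀ i : Fin n, polyEdge v i = segment ℝ (q i.val) (q ((i.val + 1) % n)) := by
    intro i
    simp only [polyEdge]
    rw [hvq i, hvq (nextIdx i)]
    rfl
  have hlast : (n - 1 + 1) % n = 0 := by
    have h : n - 1 + 1 = n := by omega
    rw [h, Nat.mod_self]
  -- condition (1) : consecutive edges meet exactly at the common vertex
  have cond1 : ∀ i : Fin n, polyEdge v i ∩ polyEdge v (nextIdx i) = {v (nextIdx i)} := by
    intro i
    have hi := i.2
    rcases Nat.lt_or_ge i.val (n-1) with hilt | hige
    · have hni : (nextIdx i).val = i.val + 1 := Nat.mod_eq_of_lt (by omega)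
      rw [hedge i, hedge (nextIdx i), hvq (nextIdx i), hni]
      rw [show (i.val + 1) % n = i.val + 1 from Nat.mod_eq_of_lt (by omega)]
      rcases Nat.eq_zero_or_pos i.val with h0 | hpos
      · -- (A) first edge from b
        rw [h0]
        rw [show (0 + 1 + 1) % n = 2 from Nat.mod_eq_of_lt (by omega)]
        ext x
        simp only [Set.mem_inter_iff, Set.mem_singleton_iff]
        constructor
        · rintro ⟨hx0, hx1⟩
          have hm := MEL 1 le_rfl (by omega) x hx1
          rcases EEL0 x hx0 with rfl | ⟨hne, hang⟩
          · exact absurd hub hm.1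
          · exact hm.2.2.2.1 hang
        · rintro rfl
          exact ⟨right_mem_segment ℝ _ _, left_mem_segment ℝ _ _⟩
      · rcases Nat.lt_or_ge (i.val + 1) (n-1) with h2 | h2
        · -- (B) both middle
          rw [show (i.val + 1 + 1) % n = i.val + 1 + 1 from Nat.mod_eq_of_lt (by omega)]
          ext x
          simp only [Set.mem_inter_iff, Set.mem_singleton_iff]
          constructor
          · rintro ⟨hx0, hx1⟩
            have hm0 := MEL i.val hpos (by omega) x hx0
            have hm1 := MEL (i.val+1) (by omega) (by omega) x hx1
            exact hm0.2.2.2.2 (le_antisymm hm0.2.2.1 hm1.2.1)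
          · rintro rfl
            exact ⟨right_mem_segment ℝ _ _, left_mem_segment ℝ _ _⟩
        · -- (C) middle then last edge
          have hieq : i.val + 1 = n - 1 := by omega
          rw [hieq, hlast]
          ext x
          simp only [Set.mem_inter_iff, Set.mem_singleton_iff]
          constructor
          · rintro ⟨hx0, hx1⟩
            have hm0 := MEL i.val hpos (by omega) x (by rw [← hieq] at hx0; exact hx0)
            rcases EELn x hx1 with rfl | ⟨hne, hang⟩
            · exact absurd hub hm0.1
            · rw [← hieq] at hang ⊢
              exact hm0.2.2.2.2 hang
          · rintro rfl
            exact ⟨right_mem_segment ℝ _ _, left_mem_segment ℝ _ _⟩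
    · -- (D) last edge then first edge
      have hieq : i.val = n - 1 := by omega
      have hni : (nextIdx i).val = 0 := by
        show (i.val + 1) % n = 0
        rw [hieq]; exact hlast
      rw [hedge i, hedge (nextIdx i), hvq (nextIdx i), hni, hieq, hlast]
      rw [show (0 + 1) % n = 1 from Nat.mod_eq_of_lt (by omega)]
      ext x
      simp only [Set.mem_inter_iff, Set.mem_singleton_iff]
      constructor
      · rintro ⟨hx0, hx1⟩
        rcases EELn x hx0 with rfl | ⟨hne, hang0⟩
        · rfl
        · rcases EEL0 x hx1 with rfl | ⟨hne1, hang1⟩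
          · rfl
          · exfalso
            rw [hang0] at hang1
            exact absurd hang1 (ne_of_gt (hstrict 1 (n-1) le_rfl (by omega) le_rfl))
      · rintro rfl
        exact ⟨right_mem_segment ℝ _ _, left_mem_segment ℝ _ _⟩
  -- condition (2) : non-adjacent edges are disjoint
  have main2 : ∀ i j : Fin n, i.val < j.val → j ≠ nextIdx i → i ≠ nextIdx j →
      polyEdge v i ∩ polyEdge v j = ∅ := by
    intro i j hij hji hij'
    have hjlt := j.2
    have hji' : j.val ≠ i.val + 1 := by
      intro h
      apply hji
      apply Fin.ext
      rw [h]
      show _ = (i.val + 1) % n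
      exact (Nat.mod_eq_of_lt (by omega)).symm
    rcases Nat.lt_or_ge j.val (n-1) with hjmid | hjlast
    · have hjpos : 1 ≤ j.val := by omega
      rw [hedge i, hedge j]
      rw [show (j.val + 1) % n = j.val + 1 from Nat.mod_eq_of_lt (by omega)]
      rcases Nat.eq_zero_or_pos i.val with h0 | hpos
      · rw [h0, show (0+1) % n = 1 from Nat.mod_eq_of_lt (by omega)]
        ext x
        simp only [Set.mem_inter_iff, Set.mem_empty_iff_false, iff_false, not_and]
        intro hx0 hx1
        have hm := MEL j.val hjpos (by omega) x hx1
        rcases EEL0 x hx0 with rfl | ⟨hne, hang⟩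
        · exact hm.1 hub
        · have hlt : key (q 1) < key (q j.val) := hstrict 1 j.val le_rfl (by omega) (by omega)
          have h21 := hm.2.1
          rw [hang] at h21
          linarith
      · rw [show (i.val + 1) % n = i.val + 1 from Nat.mod_eq_of_lt (by omega)]
        ext x
        simp only [Set.mem_inter_iff, Set.mem_empty_iff_false, iff_false, not_and]
        intro hx0 hx1
        have hm0 := MEL i.val hpos (by omega) x hx0
        have hm1 := MEL j.val hjpos (by omega) x hx1
        have hlt : key (q (i.val+1)) < key (q j.val) :=
          hstrict (i.val+1) j.val (by omega) (by omega) (by omega)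
        linarith [hm0.2.2.1, hm1.2.1]
    · have hjeq : j.val = n - 1 := by omega
      have hipos : 1 ≤ i.val := by
        rcases Nat.eq_zero_or_pos i.val with h0 | h
        · exfalso
          apply hij'
          apply Fin.ext
          rw [h0]
          show (0:ℕ) = (j.val + 1) % n
          rw [hjeq, hlast]
        · exact h
      rw [hedge i, hedge j, hjeq, hlast]
      rw [show (i.val + 1) % n = i.val + 1 from Nat.mod_eq_of_lt (by omega)]
      ext x
      simp only [Set.mem_inter_iff, Set.mem_empty_iff_false, iff_false, not_and]
      intro hx0 hx1
      have hm0 := MEL i.val hipos (by omega) x hx0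
      rcases EELn x hx1 with rfl | ⟨hne, hang⟩
      · exact hm0.1 hub
      · have hlt : key (q (i.val+1)) < key (q (n-1)) :=
          hstrict (i.val+1) (n-1) (by omega) (by omega) le_rfl
        have h221 := hm0.2.2.1
        rw [hang] at h221
        linarith
  have cond2 : ∀ i j : Fin n, i ≠ j → j ≠ nextIdx i → i ≠ nextIdx j →
      polyEdge v i ∩ polyEdge v j = ∅ := by
    intro i j hne hji hij
    rcases Nat.lt_or_ge i.val j.val with h | h
    · exact main2 i j h hji hij
    · have h' : j.val < i.val := by
        rcases Nat.lt_or_ge j.val i.val with h' | h'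
        · exact h'
        · exact absurd (Fin.ext (by omega) : i = j) hne
      rw [Set.inter_comm]
      exact main2 j i h' hij hji
  -- injectivity
  have hinj : Function.Injective v := by
    intro i j hij
    rw [hvdef] at hij
    simp only [] at hij
    have h := (List.Nodup.get_inj_iff hLnodup).mp hij
    exact Fin.ext (by simpa using congrArg Fin.val h)
  -- range
  have hrange : Set.range v = (B : Set Pt) := by
    ext x
    simp only [Set.mem_range]
    constructor
    · rintro ⟨i, rfl⟩
      rw [hvq]
      have := i.2
      exact hqB i.val (by omega)
    · intro hx
      have hxB : x ∈ B := hx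
      by_cases hxb : x = b
      · refine ⟨⟨0, by omega⟩, ?_⟩
        rw [hvq]
        rw [hxb]
        rfl
      · obtain ⟨jj, hj1, hj2, hj3⟩ := hqsurj x (Finset.mem_erase.mpr ⟨hxb, hxB⟩)
        exact ⟨⟨jj, by omega⟩, by rw [hvq]; exact hj3⟩
  -- the ray from r away from b misses the curve
  have hray_nc : ∀ t : ℝ, 1 ≤ t → (b + t • (r - b)) ∉ polyCurve v := by
    intro t ht hmem
    rw [polyCurve, Set.mem_iUnion] at hmem
    obtain ⟨i, hmi⟩ := hmem
    have hut : u (b + t • (r - b)) = (t:ℂ) := huray t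
    have hunz : u (b + t • (r - b)) ≠ 0 := by
      rw [hut]
      exact_mod_cast (by linarith : (t:ℝ) ≠ 0)
    have hAng : Ang (u (b + t • (r - b))) = 2*π := by rw [hut]; exact Ang_pos_real (by linarith)
    rw [hedge i] at hmi
    have hi := i.2
    rcases Nat.lt_or_ge i.val (n-1) with hilt | hige
    · rw [show (i.val + 1) % n = i.val + 1 from Nat.mod_eq_of_lt (by omega)] at hmi
      rcases Nat.eq_zero_or_pos i.val with h0 | hpos
      · rw [h0] at hmi
        rcases EEL0 _ hmi with he | ⟨hne, hang⟩
        · exact hunz (by rw [he]; exact hub)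
        · rw [hAng] at hang
          exact absurd hang.symm (ne_of_lt (hkeylt _ (hqmem 1 le_rfl (by omega))))
      · have hm := MEL i.val hpos (by omega) _ hmi
        have h221 := hm.2.2.1
        rw [hAng] at h221
        exact absurd h221 (not_le.2 (hkeylt _ (hqmem (i.val+1) (by omega) (by omega))))
    · have hieq : i.val = n-1 := by omega
      rw [hieq, hlast] at hmi
      rcases EELn _ hmi with he | ⟨hne, hang⟩
      · exact hunz (by rw [he]; exact hub)
      · rw [hAng] at hang
        exact absurd hang.symm (ne_of_lt (hkeylt _ (hqmem (n-1) (by omega) le_rfl)))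
  -- the ray is connected, unbounded, avoids the curve, contains r
  set ray : Set Pt := (fun t : ℝ => b + t • (r - b)) '' Set.Ici 1 with hraydef
  have hraysub : ray ⊆ (polyCurve v)ᶜ := by
    rintro x ⟨t, ht, rfl⟩
    exact hray_nc t ht
  have hrmem : r ∈ ray := ⟨1, Set.mem_Ici.mpr le_rfl, by simp⟩
  have hconn : IsPreconnected ray := by
    apply IsPreconnected.image isPreconnected_Ici
    apply Continuous.continuousOn
    exact continuous_const.add (continuous_id.smul continuous_const)
  have hraycc : ray ⊆ connectedComponentIn (polyCurve v)ᶜ r :=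
    hconn.subset_connectedComponentIn hrmem hraysub
  have hrnb : (0:ℝ) < ‖r - b‖ := by
    rw [norm_pos_iff]
    intro h
    exact hbr (sub_eq_zero.mp h).symm
  have hunbounded : ¬ Bornology.IsBounded (connectedComponentIn (polyCurve v)ᶜ r) := by
    intro hbd
    have hraybd : Bornology.IsBounded ray := hbd.subset hraycc
    obtain ⟨C, hC⟩ := (isBounded_iff_forall_norm_le).mp hraybd
    set t : ℝ := max 1 ((C + ‖b‖ + 1)/‖r - b‖) with htdef
    have ht1 : (1:ℝ) ≤ t := le_max_left _ _
    have ht2 : (C + ‖b‖ + 1)/‖r - b‖ ≤ t := le_max_right _ _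
    have hxmem : b + t • (r - b) ∈ ray := ⟨t, ht1, rfl⟩
    have hxC := hC _ hxmem
    have hxb : ‖(b + t • (r - b)) - b‖ = t * ‖r - b‖ := by
      rw [add_sub_cancel_left, norm_smul, Real.norm_eq_abs, abs_of_pos (by linarith)]
    have htr : C + ‖b‖ + 1 ≤ t * ‖r - b‖ := by
      rw [div_le_iff₀ hrnb] at ht2
      linarith
    have hxlow : t * ‖r - b‖ ≤ ‖b + t • (r - b)‖ + ‖b‖ := by
      rw [← hxb]
      exact norm_sub_le _ _
    linarith
  -- assemble
  refine ⟨n, v, ⟨hn3, hinj, cond1, cond2⟩, hrange, ?_⟩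
  intro r' hr'
  have hrr : r' = r := by
    rw [hRr] at hr'
    simpa using hr'
  subst hrr
  refine ⟨?_, hunbounded⟩
  have := hray_nc 1 le_rfl
  simpa using this

end PolyAuxiliary
end
end
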